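/- arXiv:2109.06911 — 5 statements merged into one kernel-verified Lean document; each statement's English description precedes it below -/
import Mathlib

section
/- (Finite sample guarantees for SVP.) Let K := 2·sup_{x∈𝒳} max_{i∈Σ} |ℓ(x,i)|. For every x ∈ 𝒳, P ∈ 𝒫°, and T ∈ ℕ: ℙ^∞( c(x,P) ≤ ĉ_V(x,P̂_T,T) + (7K/3)·(a_T/T) ) ≥ 1 − 2e^{−a_T}, and ℙ^∞( c(x,P) ≥ ĉ_V(x,P̂_T,T) − √( (8a_T/T)·Var_P(ℓ(x,ξ)) ) − (7K/3)·(a_T/T) ) ≥ 1 − 2e^{−a_T}. -/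
open Filter Asymptotics

namespace DDO

/-- The probability simplex `𝒫` over the scenario set `Σ = Fin d`. -/
def simplex (d : ℕ) : Set (Fin d → ℝ) :=
  {P | (∀ i, 0 ≤ P i) ∧ ∑ i, P i = 1}

/-- The relative interior `𝒫°` of the probability simplex. -/
def simplexInt (d : ℕ) : Set (Fin d → ℝ) :=
  {P | (∀ i, 0 < P i) ∧ ∑ i, P i = 1}

/-- Expected cost `c(x, P) = ∑ i, ℓ(x, i) · P(i)` (extended linearly to `ℝ^d`). -/
noncomputable def cost {X : Type*} {d : ℕ} (ℓ : X → Fin d → ℝ) (x : X)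
    (P : Fin d → ℝ) : ℝ :=
  ∑ i, ℓ x i * P i

/-- Variance `Var_P(ℓ(x, ξ))` of the loss under `P`. -/
noncomputable def varLoss {X : Type*} {d : ℕ} (ℓ : X → Fin d → ℝ) (x : X)
    (P : Fin d → ℝ) : ℝ :=
  (∑ i, ℓ x i ^ 2 * P i) - cost ℓ x P ^ 2

/-- Empirical distribution `P̂_T` of the `T` samples `ω`. -/
noncomputable def empDist {d T : ℕ} (ω : Fin T → Fin d) : Fin d → ℝ :=
  fun i => ((Finset.univ.filter (fun t => ω t = i)).card : ℝ) / (T : ℝ)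

open Classical in
/-- `ℙ^∞(A)`: the probability, under i.i.d. sampling from `P`, of an event `A`
depending on the first `T` samples. -/
noncomputable def probT {d : ℕ} (P : Fin d → ℝ) (T : ℕ)
    (A : (Fin T → Fin d) → Prop) : ℝ :=
  ∑ ω : Fin T → Fin d, if A ω then ∏ t, P (ω t) else 0

/-- Regular predictors (the class `𝒞`): uniformly bounded, equicontinuous,
differentiable in the distribution argument (in the Fréchet sense along the simplex),
with uniformly bounded and equicontinuous derivatives. -/
structure IsRegularPredictor {X : Type*} [MetricSpace X] (d : ℕ)
    (chat : X → (Fin d → ℝ) → ℕ → ℝ) : Prop where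
  unifBounded : ∃ K : ℝ, ∀ (T : ℕ) (x : X), ∀ P ∈ simplex d, |chat x P T| ≤ K
  equicontinuous : ∀ (x : X), ∀ P ∈ simplex d, ∀ ε > (0 : ℝ), ∃ δ > (0 : ℝ),
    ∀ (T : ℕ) (x' : X), ∀ P' ∈ simplex d,
      dist x x' < δ → dist P P' < δ → |chat x P T - chat x' P' T| < ε
  differentiableDeriv : ∃ D : X → (Fin d → ℝ) → ℕ → ((Fin d → ℝ) →L[ℝ] ℝ),
    (∀ (T : ℕ) (x : X), ∀ P ∈ simplex d,
      HasFDerivWithinAt (fun Q => chat x Q T) (D x P T) (simplex d) P) ∧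
    (∃ K : ℝ, ∀ (T : ℕ) (x : X), ∀ P ∈ simplex d, ‖D x P T‖ ≤ K) ∧
    (∀ (x : X), ∀ P ∈ simplex d, ∀ ε > (0 : ℝ), ∃ δ > (0 : ℝ),
      ∀ (T : ℕ) (x' : X), ∀ P' ∈ simplex d,
        dist x x' < δ → dist P P' < δ → ‖D x P T - D x' P' T‖ < ε)

/-- The out-of-sample guarantee at speed `(a_T)`:
`limsup_{T→∞} (1/a_T) · log ℙ^∞( c(x,P) > ĉ(x, P̂_T, T) ) ≤ -1`
for every `x ∈ 𝒳` and `P ∈ 𝒫°`, stated in the equivalent ε-eventual form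
`ℙ^∞(disappointment) ≤ exp((-1+ε) a_T)` eventually (which in particular permits a
disappointment probability equal to zero). -/
def OOSGuarantee {X : Type*} {d : ℕ} (ℓ : X → Fin d → ℝ) (a : ℕ → ℝ)
    (chat : X → (Fin d → ℝ) → ℕ → ℝ) : Prop :=
  ∀ (x : X), ∀ P ∈ simplexInt d, ∀ ε > (0 : ℝ), ∀ᶠ T : ℕ in atTop,
    probT P T (fun ω => cost ℓ x P > chat x (empDist ω) T) ≤
      Real.exp ((-1 + ε) * a T)

/-- The prediction error `|ĉ(x,P,T) - c(x,P)|`. -/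
noncomputable def predErr {X : Type*} {d : ℕ} (ℓ : X → Fin d → ℝ)
    (chat : X → (Fin d → ℝ) → ℕ → ℝ) (x : X) (P : Fin d → ℝ) (T : ℕ) : ℝ :=
  |chat x P T - cost ℓ x P|

open Classical in
/-- Ratio with the convention `0 / 0 = 1`. -/
noncomputable def ratio (u v : ℝ) : ℝ := if u = 0 ∧ v = 0 then 1 else u / v

/-- The partial order `⪯_𝒞` on predictors:
`limsup_{T→∞} |ĉ₁(x,P,T) - c(x,P)| / |ĉ₂(x,P,T) - c(x,P)| ≤ 1`
(convention `0/0 = 1`) for every `x ∈ 𝒳`, `P ∈ 𝒫°`, stated in the equivalent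
ε-eventual form (the ratio is a nonnegative sequence). -/
def PredOrder {X : Type*} {d : ℕ} (ℓ : X → Fin d → ℝ)
    (chat1 chat2 : X → (Fin d → ℝ) → ℕ → ℝ) : Prop :=
  ∀ (x : X), ∀ P ∈ simplexInt d, ∀ ε > (0 : ℝ), ∀ᶠ T : ℕ in atTop,
    ratio (predErr ℓ chat1 x P T) (predErr ℓ chat2 x P T) ≤ 1 + ε

/-- The equivalence `≡` on predictors: `|ĉ₁ - c|` and `|ĉ₂ - c|` are asymptotically
equivalent as `T → ∞` for every `x ∈ 𝒳` and `P ∈ 𝒫°`. -/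
def PredEquiv {X : Type*} {d : ℕ} (ℓ : X → Fin d → ℝ)
    (chat1 chat2 : X → (Fin d → ℝ) → ℕ → ℝ) : Prop :=
  ∀ (x : X), ∀ P ∈ simplexInt d,
    (fun T : ℕ => predErr ℓ chat1 x P T) ~[atTop]
      (fun T : ℕ => predErr ℓ chat2 x P T)

/-- A single term `q · log(q/p)` of the relative entropy, with the conventions
`0 · log(0/p) = 0` and `q · log(q/0) = ∞` for `q > 0`. -/
noncomputable def klTerm (q p : ℝ) : EReal :=
  if q = 0 then 0 else if p = 0 then ⊤ else ((q * Real.log (q / p) : ℝ) : EReal)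

/-- The relative entropy (KL divergence) `I(Q, P')`. -/
noncomputable def relEnt {d : ℕ} (Q P' : Fin d → ℝ) : EReal :=
  ∑ i, klTerm (Q i) (P' i)

/-- The KL-DRO predictor with radius `r`:
`ĉ_KL(x,P) = sup { c(x,P') : P' ∈ 𝒫, I(P,P') ≤ r }`. -/
noncomputable def cKL {X : Type*} {d : ℕ} (ℓ : X → Fin d → ℝ) (r : ℝ)
    (x : X) (P : Fin d → ℝ) : ℝ :=
  sSup {y | ∃ P' ∈ simplex d, relEnt P P' ≤ (r : EReal) ∧ y = cost ℓ x P'}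

/-- The robust predictor `ĉ_R(x) = max_{i ∈ Σ} ℓ(x,i)`. -/
noncomputable def cR {X : Type*} {d : ℕ} (ℓ : X → Fin d → ℝ) (x : X) : ℝ :=
  ⨆ i : Fin d, ℓ x i

/-- The sample variance penalization (SVP) predictor
`ĉ_V(x,P,T) = c(x,P) + √((2 a_T / T) · Var_P(ℓ(x,ξ)))`. -/
noncomputable def cV {X : Type*} {d : ℕ} (a : ℕ → ℝ) (ℓ : X → Fin d → ℝ)
    (x : X) (P : Fin d → ℝ) (T : ℕ) : ℝ :=
  cost ℓ x P + Real.sqrt ((2 * a T / (T : ℝ)) * varLoss ℓ x P)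

/-- The squared local ellipsoid norm `‖Δ‖_P² = (1/2) ∑ i, Δ_i² / P(i)`. -/
noncomputable def ellNormSq {d : ℕ} (P Δ : Fin d → ℝ) : ℝ :=
  (1 / 2) * ∑ i, Δ i ^ 2 / P i

/-- The optimal cost `c*(P) = min_{x ∈ 𝒳} c(x,P)`. -/
noncomputable def cstar {X : Type*} {d : ℕ} (ℓ : X → Fin d → ℝ)
    (P : Fin d → ℝ) : ℝ :=
  sInf (Set.range fun x : X => cost ℓ x P)

/-- The optimal predicted cost `ĉ*(P,T) = min_{x ∈ 𝒳} ĉ(x,P,T)`. -/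
noncomputable def chatStar {X : Type*} {d : ℕ} (chat : X → (Fin d → ℝ) → ℕ → ℝ)
    (P : Fin d → ℝ) (T : ℕ) : ℝ :=
  sInf (Set.range fun x : X => chat x P T)

/-- `x̂` is a prescriptor associated with the predictor `ĉ`:
`x̂_T(P) ∈ argmin_{x ∈ 𝒳} ĉ(x,P,T)` for all `P ∈ 𝒫` and `T`. -/
def IsPrescriptor {X : Type*} {d : ℕ} (chat : X → (Fin d → ℝ) → ℕ → ℝ)
    (xhat : ℕ → (Fin d → ℝ) → X) : Prop :=
  ∀ (T : ℕ), ∀ P ∈ simplex d, ∀ x : X, chat (xhat T P) P T ≤ chat x P T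

/-- The prescription out-of-sample guarantee at speed `(a_T)`:
`limsup_{T→∞} (1/a_T) · log ℙ^∞( c(x̂_T(P̂_T), P) > ĉ*(P̂_T, T) ) ≤ -1`
for every `P ∈ 𝒫°`, stated in the equivalent ε-eventual form. -/
def PrescOOSGuarantee {X : Type*} {d : ℕ} (ℓ : X → Fin d → ℝ) (a : ℕ → ℝ)
    (chat : X → (Fin d → ℝ) → ℕ → ℝ) (xhat : ℕ → (Fin d → ℝ) → X) : Prop :=
  ∀ P ∈ simplexInt d, ∀ ε > (0 : ℝ), ∀ᶠ T : ℕ in atTop,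
    probT P T (fun ω =>
        cost ℓ (xhat T (empDist ω)) P > chatStar chat (empDist ω) T) ≤
      Real.exp ((-1 + ε) * a T)

/-- The partial order `⪯_X̂` on prescriptors:
`limsup_{T→∞} |ĉ₁*(P,T) - c*(P)| / |ĉ₂*(P,T) - c*(P)| ≤ 1` (convention `0/0 = 1`)
for every `P ∈ 𝒫°`, stated in the equivalent ε-eventual form. -/
def PrescOrder {X : Type*} {d : ℕ} (ℓ : X → Fin d → ℝ)
    (chat1 chat2 : X → (Fin d → ℝ) → ℕ → ℝ) : Prop :=
  ∀ P ∈ simplexInt d, ∀ ε > (0 : ℝ), ∀ᶠ T : ℕ in atTop,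
    ratio |chatStar chat1 P T - cstar ℓ P| |chatStar chat2 P T - cstar ℓ P| ≤ 1 + ε

/-- The equivalence `≡_X̂` on prescriptors: `|ĉ₁* - c*|` and `|ĉ₂* - c*|` are
asymptotically equivalent as `T → ∞` for every `P ∈ 𝒫°`. -/
def PrescEquiv {X : Type*} {d : ℕ} (ℓ : X → Fin d → ℝ)
    (chat1 chat2 : X → (Fin d → ℝ) → ℕ → ℝ) : Prop :=
  ∀ P ∈ simplexInt d,
    (fun T : ℕ => |chatStar chat1 P T - cstar ℓ P|) ~[atTop]
      (fun T : ℕ => |chatStar chat2 P T - cstar ℓ P|)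

set_option maxHeartbeats 2000000

/-! ### Auxiliary lemmas for `stmt_9` -/

section Stmt9Aux

open Classical

lemma aux_one_sub_mul_exp_le (x : ℝ) : (1 - x) * Real.exp x ≤ 1 := by
  have h := Real.add_one_le_exp (-x)
  calc (1 - x) * Real.exp x ≤ Real.exp (-x) * Real.exp x := by
        apply mul_le_mul_of_nonneg_right _ (Real.exp_pos x).le
        linarith
    _ = 1 := by rw [← Real.exp_add]; simp

lemma aux_g1 {x : ℝ} (hx : 0 ≤ x) : (2 - x) * Real.exp x ≤ 2 + x := by
  have hder : ∀ t : ℝ, HasDerivAt (fun t : ℝ => 2 + t - (2 - t) * Real.exp t)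
      (1 - (1 - t) * Real.exp t) t := by
    intro t
    have h1 : HasDerivAt (fun t : ℝ => 2 - t) (-1) t := (hasDerivAt_id t).const_sub 2
    have h3 := h1.mul (Real.hasDerivAt_exp t)
    have h4 := ((hasDerivAt_id t).const_add 2).sub h3
    exact h4.congr_deriv (by ring)
  have key : MonotoneOn (fun t : ℝ => 2 + t - (2 - t) * Real.exp t) (Set.Ici 0) := by
    apply monotoneOn_of_deriv_nonneg (convex_Ici 0)
    · exact fun t _ => ((hder t).differentiableAt.continuousAt).continuousWithinAt
    · exact fun t _ => (hder t).differentiableAt.differentiableWithinAt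
    · intro t ht
      rw [(hder t).deriv]
      have := aux_one_sub_mul_exp_le t
      linarith
  have h0 := key (Set.mem_Ici.2 le_rfl) (Set.mem_Ici.2 hx) hx
  simp [Real.exp_zero] at h0
  linarith

lemma aux_g2 {x : ℝ} (hx : 0 ≤ x) : (3 - x) * Real.exp x ≤ 3 + 2*x + x^2/2 := by
  have hder : ∀ t : ℝ, HasDerivAt (fun t : ℝ => 3 + 2*t + t^2/2 - (3 - t) * Real.exp t)
      (2 + t - (2 - t) * Real.exp t) t := by
    intro t
    have h1 : HasDerivAt (fun t : ℝ => 3 - t) (-1) t := (hasDerivAt_id t).const_sub 3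
    have h3 := h1.mul (Real.hasDerivAt_exp t)
    have hp : HasDerivAt (fun t : ℝ => 3 + 2*t + t^2/2) (2 + t) t := by
      have := (((hasDerivAt_id t).const_mul 2).const_add 3).add
        ((hasDerivAt_pow 2 t).div_const 2)
      exact this.congr_deriv (by ring)
    have h4 := hp.sub h3
    exact h4.congr_deriv (by ring)
  have key : MonotoneOn (fun t : ℝ => 3 + 2*t + t^2/2 - (3 - t) * Real.exp t) (Set.Ici 0) := by
    apply monotoneOn_of_deriv_nonneg (convex_Ici 0)
    · exact fun t _ => ((hder t).differentiableAt.continuousAt).continuousWithinAt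
    · exact fun t _ => (hder t).differentiableAt.differentiableWithinAt
    · intro t ht
      rw [(hder t).deriv]
      have := aux_g1 (le_of_lt (by simpa using ht) : (0:ℝ) ≤ t)
      linarith
  have h0 := key (Set.mem_Ici.2 le_rfl) (Set.mem_Ici.2 hx) hx
  simp [Real.exp_zero] at h0
  linarith

lemma aux_exp_le_quad_neg {x : ℝ} (hx : x ≤ 0) : Real.exp x ≤ 1 + x + x^2/2 := by
  have hder : ∀ t : ℝ, HasDerivAt (fun t : ℝ => 1 + t + t^2/2 - Real.exp t)
      (1 + t - Real.exp t) t := by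
    intro t
    have hp : HasDerivAt (fun t : ℝ => 1 + t + t^2/2) (1 + t) t := by
      have := ((hasDerivAt_id t).const_add 1).add ((hasDerivAt_pow 2 t).div_const 2)
      exact this.congr_deriv (by ring)
    have h4 := hp.sub (Real.hasDerivAt_exp t)
    exact h4
  have key : AntitoneOn (fun t : ℝ => 1 + t + t^2/2 - Real.exp t) (Set.Iic 0) := by
    apply antitoneOn_of_deriv_nonpos (convex_Iic 0)
    · exact fun t _ => ((hder t).differentiableAt.continuousAt).continuousWithinAt
    · exact fun t _ => (hder t).differentiableAt.differentiableWithinAt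
    · intro t ht
      rw [(hder t).deriv]
      have := Real.add_one_le_exp t
      linarith
  have h0 := key (Set.mem_Iic.2 hx) (Set.mem_Iic.2 le_rfl) hx
  simp [Real.exp_zero] at h0
  linarith

lemma aux_exp_le_quad_pos {x : ℝ} (hx : 0 ≤ x) (hx3 : x < 3) :
    Real.exp x ≤ 1 + x + x^2/(2*(1 - x/3)) := by
  have h := aux_g2 hx
  have h3 : 0 < 3 - x := by linarith
  have hd : 0 < 2*(1 - x/3) := by linarith
  rw [← sub_nonneg]
  have heq : 1 + x + x^2/(2*(1 - x/3)) - Real.exp x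
      = ((3 + 2*x + x^2/2) - (3 - x) * Real.exp x) / (2*(1-x/3)) * (2/3) := by
    field_simp
    ring
  rw [heq]
  apply mul_nonneg (div_nonneg (by linarith) hd.le) (by norm_num)

lemma aux_exp_le_quad {x c : ℝ} (hxc : x ≤ c) (hc0 : 0 ≤ c) (hc3 : c < 3) :
    Real.exp x ≤ 1 + x + x^2/(2*(1 - c/3)) := by
  have hc : 0 < 1 - c/3 := by linarith
  rcases le_or_gt x 0 with h | h
  · have := aux_exp_le_quad_neg h
    have h2 : x^2/2 ≤ x^2/(2*(1 - c/3)) := by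
      apply div_le_div_of_nonneg_left (sq_nonneg x) (by linarith)
      nlinarith
    linarith
  · have := aux_exp_le_quad_pos h.le (lt_of_le_of_lt hxc hc3)
    have h2 : x^2/(2*(1 - x/3)) ≤ x^2/(2*(1 - c/3)) := by
      apply div_le_div_of_nonneg_left (sq_nonneg x) (by linarith)
      have : x/3 ≤ c/3 := by linarith
      nlinarith [lt_of_le_of_lt hxc hc3]
    linarith

variable {d T : ℕ} {P : Fin d → ℝ}

lemma aux_sum_prod_eq (f : Fin d → ℝ) :
    ∑ ω : Fin T → Fin d, (∏ t, f (ω t)) = (∑ i, f i)^T := by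
  have h1 : (∑ i, f i)^T = ∏ _t : Fin T, (∑ i, f i) := by
    rw [Finset.prod_const, Finset.card_univ, Fintype.card_fin]
  rw [h1, Finset.prod_univ_sum, Fintype.piFinset_univ]

lemma aux_probT_nonneg (hP0 : ∀ i, 0 ≤ P i) (A : (Fin T → Fin d) → Prop) :
    0 ≤ probT P T A := by
  apply Finset.sum_nonneg
  intro ω _
  split
  · exact Finset.prod_nonneg fun t _ => hP0 (ω t)
  · exact le_rfl

lemma aux_probT_one (hP1 : ∑ i, P i = 1) (A : (Fin T → Fin d) → Prop)
    (hA : ∀ ω, A ω) : probT P T A = 1 := by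
  unfold probT
  have h : ∀ ω : Fin T → Fin d, (if A ω then ∏ t, P (ω t) else 0) = ∏ t, P (ω t) := by
    intro ω; simp [hA ω]
  rw [Finset.sum_congr rfl fun ω _ => h ω, aux_sum_prod_eq, hP1, one_pow]

lemma aux_probT_compl (hP1 : ∑ i, P i = 1) (A : (Fin T → Fin d) → Prop) :
    probT P T A = 1 - probT P T (fun ω => ¬ A ω) := by
  have e1 : probT P T (fun ω => ¬ A ω)
      = ∑ ω : Fin T → Fin d, ((∏ t, P (ω t)) - (if A ω then ∏ t, P (ω t) else 0)) := by
    unfold probT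
    refine Finset.sum_congr rfl fun ω _ => ?_
    by_cases h : A ω <;> simp [h]
  rw [e1, Finset.sum_sub_distrib, aux_sum_prod_eq P, hP1, one_pow]
  unfold probT
  ring

lemma aux_probT_le_add (hP0 : ∀ i, 0 ≤ P i) {A B C : (Fin T → Fin d) → Prop}
    (h : ∀ ω, A ω → B ω ∨ C ω) :
    probT P T A ≤ probT P T B + probT P T C := by
  have key : ∀ ω : Fin T → Fin d, (if A ω then ∏ t, P (ω t) else 0)
      ≤ (if B ω then ∏ t, P (ω t) else 0) + (if C ω then ∏ t, P (ω t) else 0) := by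
    intro ω
    have hp : 0 ≤ ∏ t, P (ω t) := Finset.prod_nonneg fun t _ => hP0 (ω t)
    by_cases hA : A ω
    · rcases h ω hA with hB | hC
      · by_cases hC' : C ω <;> simp [hA, hB, hC'] <;> linarith
      · by_cases hB' : B ω <;> simp [hA, hB', hC] <;> linarith
    · by_cases hB' : B ω <;> by_cases hC' : C ω <;> simp [hA, hB', hC'] <;> positivity
  calc probT P T A ≤ ∑ ω : Fin T → Fin d,
        ((if B ω then ∏ t, P (ω t) else 0) + (if C ω then ∏ t, P (ω t) else 0)) :=
        Finset.sum_le_sum fun ω _ => key ω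
    _ = probT P T B + probT P T C := Finset.sum_add_distrib

lemma aux_probT_mono (hP0 : ∀ i, 0 ≤ P i) {A B : (Fin T → Fin d) → Prop}
    (h : ∀ ω, A ω → B ω) :
    probT P T A ≤ probT P T B := by
  unfold probT
  apply Finset.sum_le_sum
  intro ω _
  have hp : 0 ≤ ∏ t, P (ω t) := Finset.prod_nonneg fun t _ => hP0 (ω t)
  by_cases hA : A ω
  · simp [hA, h ω hA]
  · simp only [hA, if_false]
    split
    · exact hp
    · exact le_rfl

lemma aux_chernoff (hP0 : ∀ i, 0 ≤ P i) (A : (Fin T → Fin d) → Prop)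
    (f : Fin d → ℝ) (l c : ℝ) (hl : 0 ≤ l)
    (hA : ∀ ω, A ω → c ≤ ∑ t, f (ω t)) :
    probT P T A ≤ Real.exp (-(l*c)) * (∑ i, P i * Real.exp (l * f i))^T := by
  unfold probT
  have key : ∀ ω : Fin T → Fin d, (if A ω then ∏ t, P (ω t) else 0)
      ≤ Real.exp (-(l*c)) * ∏ t, (P (ω t) * Real.exp (l * f (ω t))) := by
    intro ω
    have hp : 0 ≤ ∏ t, P (ω t) := Finset.prod_nonneg fun t _ => hP0 (ω t)
    have hrhs : Real.exp (-(l*c)) * ∏ t, (P (ω t) * Real.exp (l * f (ω t)))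
        = Real.exp (l * (∑ t, f (ω t)) - l*c) * ∏ t, P (ω t) := by
      rw [Finset.prod_mul_distrib, ← Real.exp_sum]
      rw [← Finset.mul_sum]
      rw [sub_eq_add_neg, Real.exp_add]
      ring
    rw [hrhs]
    split
    case isTrue hAω =>
      have h1 : (1:ℝ) ≤ Real.exp (l * (∑ t, f (ω t)) - l*c) := by
        rw [← Real.exp_zero]
        apply Real.exp_le_exp.2
        have := hA ω hAω
        nlinarith
      nlinarith
    case isFalse =>
      positivity
  calc ∑ ω : Fin T → Fin d, (if A ω then ∏ t, P (ω t) else 0)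
      ≤ ∑ ω : Fin T → Fin d, Real.exp (-(l*c)) * ∏ t, (P (ω t) * Real.exp (l * f (ω t))) :=
        Finset.sum_le_sum fun ω _ => key ω
    _ = Real.exp (-(l*c)) * (∑ i, P i * Real.exp (l * f i))^T := by
        rw [← Finset.mul_sum, aux_sum_prod_eq (fun i => P i * Real.exp (l * f i))]

lemma aux_emp_nonneg (ω : Fin T → Fin d) (i : Fin d) : 0 ≤ empDist ω i := by
  unfold empDist
  positivity

lemma aux_emp_avg (hT : 0 < T) (ω : Fin T → Fin d) (f : Fin d → ℝ) :
    ∑ t, f (ω t) = (T : ℝ) * ∑ i, f i * empDist ω i := by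
  have hT' : (T : ℝ) ≠ 0 := Nat.cast_ne_zero.2 hT.ne'
  have key : ∑ t, f (ω t)
      = ∑ i, ((Finset.univ.filter (fun t => ω t = i)).card : ℝ) * f i := by
    rw [← Finset.sum_fiberwise_of_maps_to (g := fun t : Fin T => ω t)
      (fun t _ => Finset.mem_univ (ω t)) (fun t => f (ω t))]
    refine Finset.sum_congr rfl fun i _ => ?_
    have hc : ∀ t ∈ Finset.univ.filter (fun t => ω t = i), f (ω t) = f i := by
      intro t ht
      rw [(Finset.mem_filter.1 ht).2]
    rw [Finset.sum_congr rfl hc, Finset.sum_const, nsmul_eq_mul]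
  rw [key, Finset.mul_sum]
  refine Finset.sum_congr rfl fun i _ => ?_
  unfold empDist
  field_simp

lemma aux_emp_sum_one (hT : 0 < T) (ω : Fin T → Fin d) : ∑ i, empDist ω i = 1 := by
  have h := aux_emp_avg hT ω (fun _ => 1)
  simp only [one_mul] at h
  have hT' : (T : ℝ) ≠ 0 := Nat.cast_ne_zero.2 hT.ne'
  have h2 : (T : ℝ) = (T : ℝ) * ∑ i, empDist ω i := by
    simpa using h
  field_simp at h2
  linarith [h2]

lemma aux_shift_identity {X : Type*} (ℓ : X → Fin d → ℝ) (x : X) {Q : Fin d → ℝ}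
    (hQ1 : ∑ i, Q i = 1) (ν : ℝ) :
    ∑ i, (ℓ x i - ν)^2 * Q i = varLoss ℓ x Q + (cost ℓ x Q - ν)^2 := by
  have e : ∀ i, (ℓ x i - ν)^2 * Q i
      = ℓ x i ^2 * Q i - 2*ν*(ℓ x i * Q i) + ν^2 * Q i := by
    intro i; ring
  rw [Finset.sum_congr rfl fun i _ => e i, Finset.sum_add_distrib, Finset.sum_sub_distrib,
    ← Finset.mul_sum, ← Finset.mul_sum, hQ1]
  unfold varLoss cost
  ring

lemma aux_varLoss_nonneg {X : Type*} (ℓ : X → Fin d → ℝ) (x : X) {Q : Fin d → ℝ}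
    (hQ0 : ∀ i, 0 ≤ Q i) (hQ1 : ∑ i, Q i = 1) :
    0 ≤ varLoss ℓ x Q := by
  have h := aux_shift_identity ℓ x hQ1 (cost ℓ x Q)
  simp only [sub_self] at h
  have h0 : 0 ≤ ∑ i, (ℓ x i - cost ℓ x Q)^2 * Q i :=
    Finset.sum_nonneg fun i _ => mul_nonneg (sq_nonneg _) (hQ0 i)
  nlinarith [h, h0]

/-- Sub-gamma (Bernstein) upper-tail bound for the sample sum. -/
lemma aux_tail_up (hP0 : ∀ i, 0 ≤ P i) (hP1 : ∑ i, P i = 1)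
    (f : Fin d → ℝ) (B S a : ℝ) (hT : 0 < T)
    (hB : 0 < B) (hS : 0 < S) (ha : 0 < a)
    (hfB : ∀ i, f i ≤ B) (hm : ∑ i, P i * f i = 0) (hv : ∑ i, P i * (f i)^2 ≤ S^2) :
    probT P T (fun ω => (T:ℝ) * (S * Real.sqrt (2*a/T) + B * (Real.sqrt (2*a/T))^2/6)
      ≤ ∑ t, f (ω t)) ≤ Real.exp (-a) := by
  have hTpos : (0:ℝ) < T := Nat.cast_pos.2 hT
  set ε := Real.sqrt (2*a/T) with hεdef
  have hε2 : ε^2 = 2*a/T := Real.sq_sqrt (by positivity)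
  have hε : 0 < ε := Real.sqrt_pos.2 (by positivity)
  set q := S + B*ε/3 with hq
  have hqpos : 0 < q := by positivity
  set l := ε/q with hldef
  have hlpos : 0 < l := by positivity
  have hlB : l*B < 3 := by
    rw [hldef, div_mul_eq_mul_div, div_lt_iff₀ hqpos, hq]
    nlinarith
  have hlB0 : 0 ≤ l*B := by positivity
  have h1ml : 1 - l*B/3 = S/q := by
    rw [hldef, hq]
    have : S + B*ε/3 ≠ 0 := by positivity
    field_simp
    ring
  have hden : 0 < 1 - l*B/3 := by rw [h1ml]; positivity
  have hmgf : ∑ i, P i * Real.exp (l * f i) ≤ Real.exp (l^2*S^2/(2*(1 - l*B/3))) := by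
    have key : ∀ i, P i * Real.exp (l * f i)
        ≤ P i * (1 + l * f i + (l*f i)^2/(2*(1 - l*B/3))) := by
      intro i
      refine mul_le_mul_of_nonneg_left ?_ (hP0 i)
      exact aux_exp_le_quad (by nlinarith [hfB i] : l * f i ≤ l*B) hlB0 hlB
    have hβ : 0 ≤ l^2/(2*(1-l*B/3)) := by positivity
    calc ∑ i, P i * Real.exp (l * f i)
        ≤ ∑ i, P i * (1 + l * f i + (l*f i)^2/(2*(1 - l*B/3))) :=
          Finset.sum_le_sum fun i _ => key i
      _ = (∑ i, P i) + l * (∑ i, P i * f i)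
            + l^2/(2*(1-l*B/3)) * (∑ i, P i * (f i)^2) := by
          rw [Finset.mul_sum, Finset.mul_sum, ← Finset.sum_add_distrib, ← Finset.sum_add_distrib]
          refine Finset.sum_congr rfl fun i _ => ?_
          field_simp
      _ ≤ 1 + l^2*S^2/(2*(1 - l*B/3)) := by
          rw [hP1, hm]
          have := mul_le_mul_of_nonneg_left hv hβ
          have heq : l^2/(2*(1-l*B/3)) * S^2 = l^2*S^2/(2*(1-l*B/3)) := by ring
          nlinarith
      _ ≤ Real.exp (l^2*S^2/(2*(1 - l*B/3))) := by
          linarith [Real.add_one_le_exp (l^2*S^2/(2*(1-l*B/3)))]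
  have harith : l * (S*ε + B*ε^2/6) - l^2*S^2/(2*(1-l*B/3)) = ε^2/2 := by
    rw [h1ml, hldef, hq]
    have h1 : S + B*ε/3 ≠ 0 := by positivity
    have h2 : S ≠ 0 := hS.ne'
    field_simp
    ring
  have hmgf0 : 0 ≤ ∑ i, P i * Real.exp (l * f i) :=
    Finset.sum_nonneg fun i _ => mul_nonneg (hP0 i) (Real.exp_pos _).le
  calc probT P T (fun ω => (T:ℝ) * (S * ε + B * ε^2/6) ≤ ∑ t, f (ω t))
      ≤ Real.exp (-(l*((T:ℝ) * (S * ε + B * ε^2/6))))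
          * (∑ i, P i * Real.exp (l * f i))^T :=
        aux_chernoff hP0 _ f l _ hlpos.le (fun ω h => h)
    _ ≤ Real.exp (-(l*((T:ℝ) * (S * ε + B * ε^2/6))))
          * (Real.exp (l^2*S^2/(2*(1 - l*B/3))))^T := by
        refine mul_le_mul_of_nonneg_left ?_ (Real.exp_pos _).le
        exact pow_le_pow_left₀ hmgf0 hmgf T
    _ ≤ Real.exp (-a) := by
        rw [← Real.exp_nat_mul, ← Real.exp_add]
        refine Real.exp_le_exp.2 (le_of_eq ?_)
        have hTa : (T:ℝ) * (ε^2/2) = a := by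
          rw [hε2]
          field_simp
        calc -(l*((T:ℝ) * (S * ε + B * ε^2/6))) + (T:ℝ)*(l^2*S^2/(2*(1 - l*B/3)))
            = -(T:ℝ)*(l * (S*ε + B*ε^2/6) - l^2*S^2/(2*(1-l*B/3))) := by ring
          _ = -(T:ℝ)*(ε^2/2) := by rw [harith]
          _ = -a := by rw [← hTa]; ring

/-- Chernoff--Kullback lower-tail bound for a nonnegative bounded sample mean. -/
lemma aux_tail_low (hP0 : ∀ i, 0 ≤ P i) (hP1 : ∑ i, P i = 1)
    (g : Fin d → ℝ) (R v θ a : ℝ) (hT : 0 < T)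
    (hR : 0 < R) (hg0 : ∀ i, 0 ≤ g i) (hgR : ∀ i, g i ≤ R^2)
    (hv : ∑ i, P i * g i = v) (hθ : 0 < θ) (ha : 0 < a)
    (hle : Real.sqrt θ ≤ Real.sqrt v)
    (hcond : R^2 * (Real.sqrt (2*a/T))^2 ≤ 2*(Real.sqrt v - Real.sqrt θ)^2) :
    probT P T (fun ω => ∑ t, g (ω t) ≤ (T:ℝ)*θ) ≤ Real.exp (-a) := by
  have hTpos : (0:ℝ) < T := Nat.cast_pos.2 hT
  set ε := Real.sqrt (2*a/T) with hεdef
  have hε2 : ε^2 = 2*a/T := Real.sq_sqrt (by positivity)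
  have hv0 : 0 ≤ v := by
    rw [← hv]
    exact Finset.sum_nonneg fun i _ => mul_nonneg (hP0 i) (hg0 i)
  have hθv : θ ≤ v := by
    calc θ = Real.sqrt θ^2 := (Real.sq_sqrt hθ.le).symm
      _ ≤ Real.sqrt v^2 := pow_le_pow_left₀ (Real.sqrt_nonneg θ) hle 2
      _ = v := Real.sq_sqrt hv0
  have hvpos : 0 < v := lt_of_lt_of_le hθ hθv
  have hvθpos : 0 < v/θ := div_pos hvpos hθ
  have hR2 : (0:ℝ) < R^2 := pow_pos hR 2
  set l := Real.log (v/θ)/R^2 with hldef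
  have hl0 : 0 ≤ l := by
    apply div_nonneg _ hR2.le
    apply Real.log_nonneg
    rw [le_div_iff₀ hθ]
    linarith
  have hlR : l * R^2 = Real.log (v/θ) := by
    rw [hldef]
    field_simp
  have hE : Real.exp (-(l*R^2)) = θ/v := by
    rw [hlR, Real.exp_neg, Real.exp_log hvθpos, inv_div]
  have hconv : ∀ i, Real.exp (l * (-(g i))) ≤ 1 - (g i/R^2) * (1 - θ/v) := by
    intro i
    have hu0 : 0 ≤ g i / R^2 := div_nonneg (hg0 i) hR2.le
    have hu1 : g i / R^2 ≤ 1 := by rw [div_le_one hR2]; exact hgR i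
    have hcx := convexOn_exp.2 (Set.mem_univ (0:ℝ)) (Set.mem_univ (-(l*R^2)))
      (by linarith : (0:ℝ) ≤ 1 - g i/R^2) hu0 (by ring)
    have harg : (1 - g i/R^2) • (0:ℝ) + (g i/R^2) • (-(l*R^2)) = l * (-(g i)) := by
      simp only [smul_eq_mul]
      field_simp
      ring
    rw [harg] at hcx
    simp only [smul_eq_mul, Real.exp_zero] at hcx
    rw [hE] at hcx
    linarith
  have hmgf : ∑ i, P i * Real.exp (l * (-(g i))) ≤ Real.exp (-((v/R^2) * (1 - θ/v))) := by
    calc ∑ i, P i * Real.exp (l * (-(g i)))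
        ≤ ∑ i, P i * (1 - (g i/R^2) * (1 - θ/v)) :=
          Finset.sum_le_sum fun i _ => mul_le_mul_of_nonneg_left (hconv i) (hP0 i)
      _ = (∑ i, P i) - (1 - θ/v)/R^2 * (∑ i, P i * g i) := by
          rw [Finset.mul_sum, ← Finset.sum_sub_distrib]
          refine Finset.sum_congr rfl fun i _ => ?_
          field_simp
      _ = 1 - (v/R^2) * (1 - θ/v) := by
          rw [hP1, hv]
          ring
      _ ≤ Real.exp (-((v/R^2) * (1 - θ/v))) := by
          linarith [Real.add_one_le_exp (-((v/R^2) * (1 - θ/v)))]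
  have hmgf0 : 0 ≤ ∑ i, P i * Real.exp (l * (-(g i))) :=
    Finset.sum_nonneg fun i _ => mul_nonneg (hP0 i) (Real.exp_pos _).le
  have hsd : Real.sqrt (v/θ) = Real.sqrt v / Real.sqrt θ := Real.sqrt_div hv0 θ
  have hsθ : Real.sqrt θ > 0 := Real.sqrt_pos.2 hθ
  have hθsq : Real.sqrt θ^2 = θ := Real.sq_sqrt hθ.le
  have hvsq : Real.sqrt v^2 = v := Real.sq_sqrt hv0
  have hlog : Real.log (v/θ) ≤ 2*(Real.sqrt v/Real.sqrt θ - 1) := by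
    have h1 : Real.log (Real.sqrt (v/θ)) ≤ Real.sqrt (v/θ) - 1 :=
      Real.log_le_sub_one_of_pos (Real.sqrt_pos.2 hvθpos)
    rw [Real.log_sqrt hvθpos.le, hsd] at h1
    linarith
  have hkey : (Real.sqrt v - Real.sqrt θ)^2 ≤ v - θ - θ * Real.log (v/θ) := by
    have h2 : θ * Real.log (v/θ) ≤ 2*(Real.sqrt θ * Real.sqrt v - θ) := by
      have hh := mul_le_mul_of_nonneg_left hlog hθ.le
      have he : θ * (2*(Real.sqrt v/Real.sqrt θ - 1)) = 2*(Real.sqrt θ * Real.sqrt v - θ) := by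
        have h3 : θ / Real.sqrt θ = Real.sqrt θ := Real.div_sqrt
        calc θ * (2*(Real.sqrt v/Real.sqrt θ - 1))
            = 2*((θ/Real.sqrt θ) * Real.sqrt v - θ) := by ring
          _ = 2*(Real.sqrt θ * Real.sqrt v - θ) := by rw [h3]
      linarith [he ▸ hh]
    nlinarith [hθsq, hvsq]
  calc probT P T (fun ω => ∑ t, g (ω t) ≤ (T:ℝ)*θ)
      ≤ Real.exp (-(l*(-((T:ℝ)*θ)))) * (∑ i, P i * Real.exp (l * (-(g i))))^T := by
        apply aux_chernoff hP0 _ _ l _ hl0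
        intro ω h
        rw [Finset.sum_neg_distrib]
        linarith
    _ ≤ Real.exp (-(l*(-((T:ℝ)*θ)))) * (Real.exp (-((v/R^2) * (1 - θ/v))))^T := by
        refine mul_le_mul_of_nonneg_left ?_ (Real.exp_pos _).le
        exact pow_le_pow_left₀ hmgf0 hmgf T
    _ ≤ Real.exp (-a) := by
        rw [← Real.exp_nat_mul, ← Real.exp_add]
        apply Real.exp_le_exp.2
        have hTa : (T:ℝ) * ε^2 = 2*a := by
          rw [hε2]
          field_simp
        have hexp : -(l*(-((T:ℝ)*θ))) + (T:ℝ)*(-((v/R^2) * (1 - θ/v)))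
            = -((T:ℝ)/R^2) * (v - θ - θ * Real.log (v/θ)) := by
          have hvne : v ≠ 0 := hvpos.ne'
          rw [hldef]
          field_simp
          ring
        rw [hexp]
        have hstep : ((T:ℝ)/R^2) * (R^2*ε^2/2)
            ≤ ((T:ℝ)/R^2) * (v - θ - θ * Real.log (v/θ)) := by
          apply mul_le_mul_of_nonneg_left _ (by positivity)
          linarith [hkey, hcond]
        have hfin : ((T:ℝ)/R^2) * (R^2*ε^2/2) = a := by
          have h9 : ((T:ℝ)/R^2) * (R^2*ε^2/2) = ((T:ℝ)*ε^2)/2 := by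
            field_simp
          rw [h9, hTa]
          ring
        linarith [hstep, hfin]

end Stmt9Aux


/-- Finite sample guarantees for the SVP predictor, with
`K = 2·sup_{x∈𝒳} max_{i∈Σ} |ℓ(x,i)|`. -/
theorem stmt_9 {X : Type*} [MetricSpace X] [CompactSpace X] {d : ℕ}
    (ℓ : X → Fin d → ℝ) (hℓ : ∀ i, Continuous fun x => ℓ x i)
    (a : ℕ → ℝ) (ha_pos : ∀ T, 0 < a T)
    (x : X) (P : Fin d → ℝ) (hP : P ∈ simplexInt d)
    (T : ℕ) (hT : 0 < T)
    (K : ℝ) (hK : K = 2 * ⨆ x' : X, ⨆ i : Fin d, |ℓ x' i|) :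
    1 - 2 * Real.exp (-a T) ≤
        probT P T (fun ω =>
          cost ℓ x P ≤ cV a ℓ x (empDist ω) T + 7 * K / 3 * (a T / (T : ℝ))) ∧
      1 - 2 * Real.exp (-a T) ≤
        probT P T (fun ω =>
          cV a ℓ x (empDist ω) T -
              Real.sqrt (8 * a T / (T : ℝ) * varLoss ℓ x P) -
              7 * K / 3 * (a T / (T : ℝ)) ≤ cost ℓ x P) := by
  classical
  obtain ⟨hPpos, hPsum⟩ := hP
  have hP0 : ∀ i, 0 ≤ P i := fun i => (hPpos i).le
  have hTpos : (0:ℝ) < (T:ℝ) := Nat.cast_pos.2 hT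
  have haT : 0 < a T := ha_pos T
  have hexpos : 0 < Real.exp (-(a T)) := Real.exp_pos _
  -- `Fin d` is nonempty
  have hdne : Nonempty (Fin d) := by
    rcases Nat.eq_zero_or_pos d with h | h
    · subst h
      simp at hPsum
    · exact ⟨⟨0, h⟩⟩
  have hXne : Nonempty X := ⟨x⟩
  -- the uniform bound on the loss
  have hKb : ∀ i, |ℓ x i| ≤ K / 2 := by
    intro i
    have hbd : ∀ j : Fin d, ∃ Cj : ℝ, ∀ x' : X, |ℓ x' j| ≤ Cj := by
      intro j
      obtain ⟨x0, _, hx0⟩ := (isCompact_univ : IsCompact (Set.univ : Set X)).exists_isMaxOn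
        ⟨x, Set.mem_univ x⟩ ((hℓ j).abs.continuousOn)
      exact ⟨|ℓ x0 j|, fun x' => hx0 (Set.mem_univ x')⟩
    choose C hC using hbd
    have hFb : ∀ x' : X, (⨆ j, |ℓ x' j|) ≤ ∑ j, |C j| := by
      intro x'
      refine ciSup_le fun j => le_trans (hC j x') (le_trans (le_abs_self _) ?_)
      exact Finset.single_le_sum (fun j' _ => abs_nonneg (C j')) (Finset.mem_univ j)
    have h1 : |ℓ x i| ≤ ⨆ j, |ℓ x j| :=
      le_ciSup (f := fun j => |ℓ x j|) (Set.Finite.bddAbove (Set.finite_range _)) i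
    have h2 : (⨆ j, |ℓ x j|) ≤ ⨆ x' : X, ⨆ j, |ℓ x' j| := by
      apply le_ciSup (f := fun x' : X => ⨆ j, |ℓ x' j|)
      exact ⟨∑ j, |C j|, by rintro _ ⟨x', rfl⟩; exact hFb x'⟩
    rw [hK]
    linarith
  obtain ⟨i0⟩ := hdne
  have hK0 : 0 ≤ K := by
    have := hKb i0
    have := abs_nonneg (ℓ x i0)
    linarith
  set μ := cost ℓ x P with hμdef
  have hμb : |μ| ≤ K/2 := by
    rw [hμdef]
    unfold cost
    calc |∑ i, ℓ x i * P i| ≤ ∑ i, |ℓ x i * P i| := Finset.abs_sum_le_sum_abs _ _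
      _ ≤ ∑ i, (K/2) * P i := by
          refine Finset.sum_le_sum fun i _ => ?_
          rw [abs_mul, abs_of_nonneg (hP0 i)]
          exact mul_le_mul_of_nonneg_right (hKb i) (hP0 i)
      _ = K/2 := by rw [← Finset.mul_sum, hPsum, mul_one]
  set s2 := varLoss ℓ x P with hs2def
  have hs20 : 0 ≤ s2 := aux_varLoss_nonneg ℓ x hP0 hPsum
  set s := Real.sqrt s2 with hsdef
  have hs0 : 0 ≤ s := Real.sqrt_nonneg _
  have hssq : s^2 = s2 := Real.sq_sqrt hs20
  have hident_μ : ∑ i, (ℓ x i - μ)^2 * P i = s2 := by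
    rw [aux_shift_identity ℓ x hPsum μ, hμdef, sub_self]
    rw [hs2def]
    ring
  have hident_μ' : ∑ i, P i * (ℓ x i - μ)^2 = s2 := by
    rw [← hident_μ]
    exact Finset.sum_congr rfl fun i _ => mul_comm _ _
  have hlb : ∀ i, |ℓ x i - μ| ≤ K := by
    intro i
    have h1 := abs_le.1 (hKb i)
    have h2 := abs_le.1 hμb
    rw [abs_le]
    constructor <;> linarith
  have hsle : s ≤ K/2 := by
    have h1 : s2 ≤ (K/2)^2 := by
      have h2 : s2 = (∑ i, ℓ x i ^2 * P i) - μ^2 := by rw [hs2def]; rfl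
      have h3 : ∑ i, ℓ x i ^2 * P i ≤ (K/2)^2 := by
        calc ∑ i, ℓ x i ^2 * P i ≤ ∑ i, (K/2)^2 * P i := by
              refine Finset.sum_le_sum fun i _ => ?_
              refine mul_le_mul_of_nonneg_right ?_ (hP0 i)
              calc ℓ x i ^ 2 = |ℓ x i|^2 := (sq_abs _).symm
                _ ≤ (K/2)^2 := by
                    apply pow_le_pow_left₀ (abs_nonneg _) (hKb i)
          _ = (K/2)^2 := by rw [← Finset.mul_sum, hPsum, mul_one]
      nlinarith [sq_nonneg μ]
    calc s = Real.sqrt s2 := rfl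
      _ ≤ Real.sqrt ((K/2)^2) := Real.sqrt_le_sqrt h1
      _ = K/2 := Real.sqrt_sq (by linarith)
  set ε := Real.sqrt (2 * a T / (T:ℝ)) with hεdef
  have hε2 : ε^2 = 2 * a T / (T:ℝ) := Real.sq_sqrt (by positivity)
  have hεpos : 0 < ε := Real.sqrt_pos.2 (by positivity)
  have h7 : 7 * K / 3 * (a T / (T:ℝ)) = 7/6*K*ε^2 := by rw [hε2]; ring
  have hVhat0 : ∀ ω : Fin T → Fin d, 0 ≤ varLoss ℓ x (empDist ω) := fun ω =>
    aux_varLoss_nonneg ℓ x (aux_emp_nonneg ω) (aux_emp_sum_one hT ω)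
  have hsqrtV : ∀ ω : Fin T → Fin d,
      Real.sqrt ((2 * a T / (T:ℝ)) * varLoss ℓ x (empDist ω))
        = ε * Real.sqrt (varLoss ℓ x (empDist ω)) := by
    intro ω
    rw [← hε2, Real.sqrt_mul (sq_nonneg ε), Real.sqrt_sq hεpos.le]
  -- the empirical averages
  have hemp_cost : ∀ ω : Fin T → Fin d,
      ∑ t, (μ - ℓ x (ω t)) = (T:ℝ) * (μ - cost ℓ x (empDist ω)) := by
    intro ω
    rw [aux_emp_avg hT ω (fun i => μ - ℓ x i)]
    congr 1
    have e : ∀ i, (μ - ℓ x i) * empDist ω i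
        = μ * empDist ω i - ℓ x i * empDist ω i := fun i => by ring
    rw [Finset.sum_congr rfl fun i _ => e i, Finset.sum_sub_distrib, ← Finset.mul_sum,
      aux_emp_sum_one hT ω, mul_one]
    rfl
  have hemp_cost' : ∀ ω : Fin T → Fin d,
      ∑ t, (ℓ x (ω t) - μ) = (T:ℝ) * (cost ℓ x (empDist ω) - μ) := by
    intro ω
    rw [aux_emp_avg hT ω (fun i => ℓ x i - μ)]
    congr 1
    have e : ∀ i, (ℓ x i - μ) * empDist ω i
        = ℓ x i * empDist ω i - μ * empDist ω i := fun i => by ring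
    rw [Finset.sum_congr rfl fun i _ => e i, Finset.sum_sub_distrib, ← Finset.mul_sum,
      aux_emp_sum_one hT ω, mul_one]
    rfl
  have hemp_sq : ∀ (ω : Fin T → Fin d) (ν : ℝ),
      ∑ t, (ℓ x (ω t) - ν)^2
        = (T:ℝ) * (varLoss ℓ x (empDist ω) + (cost ℓ x (empDist ω) - ν)^2) := by
    intro ω ν
    rw [aux_emp_avg hT ω (fun i => (ℓ x i - ν)^2)]
    congr 1
    exact aux_shift_identity ℓ x (aux_emp_sum_one hT ω) ν
  by_cases hs2z : s2 = 0
  · -- degenerate case: the loss is constant in the scenario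
    have hconst : ∀ i, ℓ x i = μ := by
      intro i
      have h0 : ∑ i, (ℓ x i - μ)^2 * P i = 0 := by rw [hident_μ, hs2z]
      have h1 := (Finset.sum_eq_zero_iff_of_nonneg
        (fun i _ => mul_nonneg (sq_nonneg (ℓ x i - μ)) (hP0 i))).1 h0 i (Finset.mem_univ i)
      have h2 : (ℓ x i - μ)^2 = 0 := by
        by_contra h3
        have h4 : 0 < (ℓ x i - μ)^2 := lt_of_le_of_ne (sq_nonneg _) (Ne.symm h3)
        nlinarith [hPpos i]
      have := pow_eq_zero_iff (n := 2) (by norm_num) |>.1 h2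
      linarith [this]
    have hchat : ∀ ω : Fin T → Fin d, cost ℓ x (empDist ω) = μ := by
      intro ω
      unfold cost
      rw [Finset.sum_congr rfl fun i _ => by rw [hconst i], ← Finset.mul_sum,
        aux_emp_sum_one hT ω, mul_one]
    have hvhat : ∀ ω : Fin T → Fin d, varLoss ℓ x (empDist ω) = 0 := by
      intro ω
      have h5 := aux_shift_identity ℓ x (aux_emp_sum_one hT ω) μ
      have h6 : ∑ i, (ℓ x i - μ)^2 * empDist ω i = 0 := by
        refine Finset.sum_eq_zero fun i _ => ?_
        rw [hconst i, sub_self]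
        ring
      have h7' := hVhat0 ω
      nlinarith [sq_nonneg (cost ℓ x (empDist ω) - μ)]
    constructor
    · have hone : probT P T (fun ω =>
          cost ℓ x P ≤ cV a ℓ x (empDist ω) T + 7 * K / 3 * (a T / (T : ℝ))) = 1 := by
        apply aux_probT_one (T := T) hPsum
        intro ω
        unfold cV
        rw [hchat ω, hvhat ω, mul_zero, Real.sqrt_zero, ← hμdef]
        have : 0 ≤ 7 * K / 3 * (a T / (T:ℝ)) := by positivity
        linarith
      rw [hone]
      linarith [Real.exp_pos (-a T)]
    · have hone : probT P T (fun ω =>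
          cV a ℓ x (empDist ω) T - Real.sqrt (8 * a T / (T:ℝ) * varLoss ℓ x P)
            - 7 * K / 3 * (a T / (T : ℝ)) ≤ cost ℓ x P) = 1 := by
        apply aux_probT_one (T := T) hPsum
        intro ω
        unfold cV
        rw [hchat ω, hvhat ω, mul_zero, Real.sqrt_zero, ← hμdef]
        have h8 : 0 ≤ 7 * K / 3 * (a T / (T:ℝ)) := by positivity
        have h9 : 0 ≤ Real.sqrt (8 * a T / (T:ℝ) * varLoss ℓ x P) := Real.sqrt_nonneg _
        linarith
      rw [hone]
      linarith [Real.exp_pos (-a T)]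
  · -- main case: positive variance
    have hs2pos : 0 < s2 := lt_of_le_of_ne hs20 (Ne.symm hs2z)
    have hspos : 0 < s := Real.sqrt_pos.2 hs2pos
    have hKpos : 0 < K := by linarith
    -- tail bound for the lower deviation of the empirical cost
    have hH1 : probT P T (fun ω => (T:ℝ) * (s * ε + K * ε^2/6)
        ≤ ∑ t, (μ - ℓ x (ω t))) ≤ Real.exp (-(a T)) := by
      have h := aux_tail_up hP0 hPsum (fun i => μ - ℓ x i) K s (a T) hT hKpos hspos haT
        (fun i => by have := abs_le.1 (hlb i); show μ - ℓ x i ≤ K; linarith)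
        (by
          have e : ∀ i, P i * (μ - ℓ x i) = μ * P i - ℓ x i * P i := fun i => by ring
          rw [Finset.sum_congr rfl fun i _ => e i, Finset.sum_sub_distrib, ← Finset.mul_sum,
            hPsum, mul_one, hμdef]
          unfold cost
          ring)
        (by
          have e : ∀ i, P i * (μ - ℓ x i)^2 = P i * (ℓ x i - μ)^2 := fun i => by ring
          rw [Finset.sum_congr rfl fun i _ => e i, hident_μ', ← hssq])
      rw [← hεdef] at h
      exact h
    -- tail bound for the upper deviation of the empirical cost
    have hH3 : probT P T (fun ω => (T:ℝ) * (s * ε + K * ε^2/6)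
        ≤ ∑ t, (ℓ x (ω t) - μ)) ≤ Real.exp (-(a T)) := by
      have h := aux_tail_up hP0 hPsum (fun i => ℓ x i - μ) K s (a T) hT hKpos hspos haT
        (fun i => by have := abs_le.1 (hlb i); show ℓ x i - μ ≤ K; linarith)
        (by
          have e : ∀ i, P i * (ℓ x i - μ) = ℓ x i * P i - μ * P i := fun i => by ring
          rw [Finset.sum_congr rfl fun i _ => e i, Finset.sum_sub_distrib, ← Finset.mul_sum,
            hPsum, mul_one, hμdef]
          unfold cost
          ring)
        (by rw [hident_μ', ← hssq])
      rw [← hεdef] at h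
      exact h
    -- tail bound for the upper deviation of the second moment
    have hH4 : probT P T (fun ω => (T:ℝ) * ((K*s) * ε + K^2 * ε^2/6)
        ≤ ∑ t, ((ℓ x (ω t) - μ)^2 - s2)) ≤ Real.exp (-(a T)) := by
      have hyK : ∀ i, (ℓ x i - μ)^2 ≤ K^2 := by
        intro i
        calc (ℓ x i - μ)^2 = |ℓ x i - μ|^2 := (sq_abs _).symm
          _ ≤ K^2 := pow_le_pow_left₀ (abs_nonneg _) (hlb i) 2
      have h := aux_tail_up hP0 hPsum (fun i => (ℓ x i - μ)^2 - s2) (K^2) (K*s) (a T) hT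
        (by positivity) (by positivity) haT
        (fun i => by have := hyK i; show (ℓ x i - μ)^2 - s2 ≤ K^2; linarith)
        (by
          have e : ∀ i, P i * ((ℓ x i - μ)^2 - s2)
              = P i * (ℓ x i - μ)^2 - s2 * P i := fun i => by ring
          rw [Finset.sum_congr rfl fun i _ => e i, Finset.sum_sub_distrib, hident_μ',
            ← Finset.mul_sum, hPsum, mul_one, sub_self])
        (by
          have e : ∀ i, P i * ((ℓ x i - μ)^2 - s2)^2
              = P i * ((ℓ x i - μ)^2)^2 - 2*s2*(P i * (ℓ x i - μ)^2)
                + s2^2 * P i := fun i => by ring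
          rw [Finset.sum_congr rfl fun i _ => e i, Finset.sum_add_distrib,
            Finset.sum_sub_distrib, ← Finset.mul_sum, ← Finset.mul_sum, hident_μ', hPsum]
          have h4 : ∑ i, P i * ((ℓ x i - μ)^2)^2 ≤ K^2 * s2 := by
            calc ∑ i, P i * ((ℓ x i - μ)^2)^2 ≤ ∑ i, P i * (K^2 * (ℓ x i - μ)^2) := by
                  refine Finset.sum_le_sum fun i _ => ?_
                  refine mul_le_mul_of_nonneg_left ?_ (hP0 i)
                  nlinarith [hyK i, sq_nonneg (ℓ x i - μ)]
              _ = K^2 * s2 := by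
                  rw [← hident_μ', Finset.mul_sum]
                  exact Finset.sum_congr rfl fun i _ => by ring
          nlinarith [hssq, hs2pos])
      rw [← hεdef] at h
      exact h
    constructor
    · -- FIRST INEQUALITY
      by_cases hcase : s ≤ K*ε
      · -- small variance: the Bernstein event alone suffices
        have hcov : ∀ ω : Fin T → Fin d,
            ¬ (cost ℓ x P ≤ cV a ℓ x (empDist ω) T + 7 * K / 3 * (a T / (T : ℝ)))
            → (T:ℝ) * (s * ε + K * ε^2/6) ≤ ∑ t, (μ - ℓ x (ω t)) := by
          intro ω hG
          by_contra hcon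
          apply hG
          rw [hemp_cost ω] at hcon
          have hbub : μ - cost ℓ x (empDist ω) ≤ s * ε + K * ε^2/6 := by
            by_contra h3
            push_neg at h3
            exact hcon (mul_le_mul_of_nonneg_left h3.le hTpos.le)
          unfold cV
          rw [hsqrtV ω, h7, ← hμdef]
          have hsq0 : 0 ≤ ε * Real.sqrt (varLoss ℓ x (empDist ω)) :=
            mul_nonneg hεpos.le (Real.sqrt_nonneg _)
          have h9 : s*ε ≤ K*ε*ε := mul_le_mul_of_nonneg_right hcase hεpos.le
          have h10 : K*ε*ε = K*ε^2 := by ring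
          linarith [hbub, hsq0]
        have hc := aux_probT_compl (T := T) hPsum (fun ω =>
          cost ℓ x P ≤ cV a ℓ x (empDist ω) T + 7 * K / 3 * (a T / (T : ℝ)))
        have hm := aux_probT_mono (T := T) hP0 hcov
        rw [hc]
        have h2e : Real.exp (-(a T)) = Real.exp (-a T) := by norm_num
        linarith [hH1, hm, hexpos]
      · push_neg at hcase
        have hεhalf : ε ≤ 1/2 := by
          have h9 : K*ε < K*(1/2) := by linarith
          exact ((mul_lt_mul_iff_right₀ hKpos).1 h9).le
        -- the shifted-center variance event
        have hH2 : probT P T (fun ω => ∑ t, (ℓ x (ω t) - (μ - (s*ε + 4*K*ε^2/3)/2))^2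
            ≤ (T:ℝ) * ((s - K*ε)^2*(1+ε^2/4))) ≤ Real.exp (-(a T)) := by
          set α := s*ε + 4*K*ε^2/3 with hαdef
          have hα0 : 0 ≤ α := by positivity
          set ν := μ - α/2 with hνdef
          have hνb : ∀ i, |ℓ x i - ν| ≤ K + α/2 := by
            intro i
            have h1 := abs_le.1 (hKb i)
            have h2 := abs_le.1 hμb
            rw [hνdef, abs_le]
            constructor <;> [skip; skip] <;> nlinarith
          have hv : ∑ i, P i * (ℓ x i - ν)^2 = s2 + (α/2)^2 := by
            have e : ∀ i, P i * (ℓ x i - ν)^2 = (ℓ x i - ν)^2 * P i := fun i => mul_comm _ _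
            rw [Finset.sum_congr rfl fun i _ => e i, aux_shift_identity ℓ x hPsum ν,
              hνdef, ← hμdef, ← hs2def]
            ring
          have hθpos : 0 < (s - K*ε)^2*(1+ε^2/4) :=
            mul_pos (pow_pos (by linarith) 2) (by positivity)
          have hsqθ : Real.sqrt ((s - K*ε)^2*(1+ε^2/4)) ≤ (s - K*ε)*(1+ε^2/8) := by
            have h1 : (s - K*ε)^2*(1+ε^2/4) ≤ ((s-K*ε)*(1+ε^2/8))^2 := by
              nlinarith [sq_nonneg (s - K*ε), sq_nonneg ε, sq_nonneg (ε^2)]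
            calc Real.sqrt ((s - K*ε)^2*(1+ε^2/4)) ≤ Real.sqrt (((s-K*ε)*(1+ε^2/8))^2) :=
                  Real.sqrt_le_sqrt h1
              _ = (s-K*ε)*(1+ε^2/8) := Real.sqrt_sq (by nlinarith)
          have hsqv : s ≤ Real.sqrt (s2 + (α/2)^2) := by
            calc s = Real.sqrt (s^2) := (Real.sqrt_sq hs0).symm
              _ ≤ Real.sqrt (s2 + (α/2)^2) := by
                  apply Real.sqrt_le_sqrt
                  rw [hssq]
                  nlinarith [sq_nonneg (α/2)]
          have he1 : s - K*ε ≤ K/2 := by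
            have h10 : 0 < K*ε := mul_pos hKpos hεpos
            linarith
          have he2 : ε^2 ≤ ε/2 := by
            have h9 : ε*ε ≤ ε*(1/2) := mul_le_mul_of_nonneg_left hεhalf hεpos.le
            have h10 : ε^2 = ε*ε := sq ε
            linarith
          have he3 : (s - K*ε)*ε^2 ≤ K*ε/4 := by
            have h9 := mul_le_mul he1 he2 (sq_nonneg ε) (by linarith : (0:ℝ) ≤ K/2)
            have h10 : K/2*(ε/2) = K*ε/4 := by ring
            linarith
          have hsmall : (s - K*ε)*(1+ε^2/8) ≤ s := by
            have h9 : (s - K*ε)*(1+ε^2/8) = (s - K*ε) + (s - K*ε)*ε^2/8 := by ring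
            have h10 : (0:ℝ) < K*ε := mul_pos hKpos hεpos
            linarith [he3]
          have hle : Real.sqrt ((s - K*ε)^2*(1+ε^2/4)) ≤ Real.sqrt (s2 + (α/2)^2) := by
            linarith
          have hcond : (K + α/2)^2 * ε^2
              ≤ 2*(Real.sqrt (s2 + (α/2)^2) - Real.sqrt ((s - K*ε)^2*(1+ε^2/4)))^2 := by
            have hDeq : s - (s - K*ε)*(1+ε^2/8) = K*ε - (s - K*ε)*ε^2/8 := by ring
            have hD : K*ε - (s - K*ε)*ε^2/8
                ≤ Real.sqrt (s2 + (α/2)^2) - Real.sqrt ((s - K*ε)^2*(1+ε^2/4)) := by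
              linarith [hsqθ, hsqv]
            have hD1 : 31*K*ε/32 ≤ K*ε - (s - K*ε)*ε^2/8 := by linarith [he3]
            have hD2 : (0:ℝ) ≤ 31*K*ε/32 := by positivity
            have h4 : s*ε ≤ K/4 := by
              have h9 := mul_le_mul hsle hεhalf hεpos.le (by linarith : (0:ℝ) ≤ K/2)
              have h10 : K/2*(1/2) = K/4 := by ring
              linarith
            have h5 : ε^2 ≤ 1/4 := by
              have h9 : ε*ε ≤ (1/2)*(1/2) :=
                mul_le_mul hεhalf hεhalf hεpos.le (by norm_num)
              have h10 : ε^2 = ε*ε := sq ε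
              linarith
            have hα2 : α/2 ≤ 7*K/24 := by
              rw [hαdef]
              have h9 : 4*K*ε^2/3 ≤ K/3 := by
                have h11 := mul_le_mul_of_nonneg_left h5 (by positivity : (0:ℝ) ≤ 4*K/3)
                have h12 : 4*K/3*(1/4) = K/3 := by ring
                have h13 : 4*K/3*ε^2 = 4*K*ε^2/3 := by ring
                linarith
              linarith [h4]
            have h2 : (K + α/2)*ε ≤ (31*K/24)*ε :=
              mul_le_mul_of_nonneg_right (by linarith) hεpos.le
            have h7' : (0:ℝ) ≤ (K + α/2)*ε := by positivity
            have hsq1 : (K + α/2)^2*ε^2 ≤ (31*K*ε/24)^2 := by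
              have := pow_le_pow_left₀ h7' h2 2
              calc (K + α/2)^2*ε^2 = ((K+α/2)*ε)^2 := by ring
                _ ≤ ((31*K/24)*ε)^2 := this
                _ = (31*K*ε/24)^2 := by ring
            have hsq2 : (31*K*ε/24)^2 ≤ 2*(31*K*ε/32)^2 := by
              have e1 : (31*K*ε/24)^2 = (961/576)*(K*ε)^2 := by ring
              have e2 : 2*(31*K*ε/32)^2 = (961/512)*(K*ε)^2 := by ring
              have e3 : (0:ℝ) ≤ (K*ε)^2 := sq_nonneg _
              linarith
            have hsq3 : (31*K*ε/32)^2 ≤ (K*ε - (s - K*ε)*ε^2/8)^2 := pow_le_pow_left₀ hD2 hD1 2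
            have hsq4 : (K*ε - (s - K*ε)*ε^2/8)^2
                ≤ (Real.sqrt (s2 + (α/2)^2) - Real.sqrt ((s - K*ε)^2*(1+ε^2/4)))^2 :=
              pow_le_pow_left₀ (by linarith) hD 2
            linarith
          have h := aux_tail_low hP0 hPsum (fun i => (ℓ x i - ν)^2) (K + α/2)
            (s2 + (α/2)^2) ((s - K*ε)^2*(1+ε^2/4)) (a T) hT (by positivity)
            (fun i => sq_nonneg _)
            (fun i => by
              have := hνb i
              calc (ℓ x i - ν)^2 = |ℓ x i - ν|^2 := (sq_abs _).symm
                _ ≤ (K + α/2)^2 := pow_le_pow_left₀ (abs_nonneg _) (hνb i) 2)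
            hv hθpos haT hle (by rw [← hεdef]; exact hcond)
          exact h
        -- covering argument
        have hcov : ∀ ω : Fin T → Fin d,
            ¬ (cost ℓ x P ≤ cV a ℓ x (empDist ω) T + 7 * K / 3 * (a T / (T : ℝ)))
            → ((T:ℝ) * (s * ε + K * ε^2/6) ≤ ∑ t, (μ - ℓ x (ω t)))
              ∨ (∑ t, (ℓ x (ω t) - (μ - (s*ε + 4*K*ε^2/3)/2))^2
                  ≤ (T:ℝ) * ((s - K*ε)^2*(1+ε^2/4))) := by
          intro ω hG
          by_contra hcon
          push_neg at hcon
          obtain ⟨h1, h2⟩ := hcon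
          apply hG
          unfold cV
          rw [hsqrtV ω, h7, ← hμdef]
          rw [hemp_cost ω] at h1
          have hb : μ - cost ℓ x (empDist ω) < s * ε + K * ε^2/6 :=
            (mul_lt_mul_iff_right₀ hTpos).1 h1
          rw [hemp_sq ω (μ - (s*ε + 4*K*ε^2/3)/2)] at h2
          have hW : (s - K*ε)^2*(1+ε^2/4)
              < varLoss ℓ x (empDist ω)
                + (cost ℓ x (empDist ω) - (μ - (s*ε + 4*K*ε^2/3)/2))^2 :=
            (mul_lt_mul_iff_right₀ hTpos).1 h2
          have hsq0 : 0 ≤ ε * Real.sqrt (varLoss ℓ x (empDist ω)) :=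
            mul_nonneg hεpos.le (Real.sqrt_nonneg _)
          rcases le_or_gt (μ - cost ℓ x (empDist ω)) (7/6*K*ε^2) with hsmb | hsmb
          · linarith
          · -- the interesting region
            have hmid : (cost ℓ x (empDist ω) - (μ - (s*ε + 4*K*ε^2/3)/2))^2
                ≤ (ε*(s - K*ε)/2)^2 := by
              apply sq_le_sq'
              · have h9 : (s*ε + 4*K*ε^2/3)/2 - (s*ε + K*ε^2/6) = -(ε*(s - K*ε)/2) := by
                  ring
                linarith
              · have h9 : (s*ε + 4*K*ε^2/3)/2 - 7/6*K*ε^2 = ε*(s - K*ε)/2 := by ring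
                linarith
            have hVlb : (s - K*ε)^2 < varLoss ℓ x (empDist ω) := by
              have h9 : (s - K*ε)^2*(1+ε^2/4) - (ε*(s - K*ε)/2)^2 = (s - K*ε)^2 := by ring
              linarith
            have hsV : s - K*ε ≤ Real.sqrt (varLoss ℓ x (empDist ω)) := by
              calc s - K*ε = Real.sqrt ((s - K*ε)^2) := (Real.sqrt_sq (by linarith)).symm
                _ ≤ Real.sqrt (varLoss ℓ x (empDist ω)) := Real.sqrt_le_sqrt hVlb.le
            have h21 : ε*(s - K*ε) ≤ ε * Real.sqrt (varLoss ℓ x (empDist ω)) :=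
              mul_le_mul_of_nonneg_left hsV hεpos.le
            have h22 : ε*(s - K*ε) = ε*s - K*ε^2 := by ring
            have h23 : s*ε = ε*s := by ring
            linarith
        have hc := aux_probT_compl (T := T) hPsum (fun ω =>
          cost ℓ x P ≤ cV a ℓ x (empDist ω) T + 7 * K / 3 * (a T / (T : ℝ)))
        have hadd := aux_probT_le_add (T := T) hP0 hcov
        rw [hc]
        have h2e : Real.exp (-(a T)) = Real.exp (-a T) := by norm_num
        linarith [hH1, hH2, hadd]
    · -- SECOND INEQUALITY
      have hcov : ∀ ω : Fin T → Fin d,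
          ¬ (cV a ℓ x (empDist ω) T - Real.sqrt (8 * a T / (T:ℝ) * varLoss ℓ x P)
              - 7 * K / 3 * (a T / (T : ℝ)) ≤ cost ℓ x P)
          → ((T:ℝ) * (s * ε + K * ε^2/6) ≤ ∑ t, (ℓ x (ω t) - μ))
            ∨ ((T:ℝ) * ((K*s) * ε + K^2 * ε^2/6) ≤ ∑ t, ((ℓ x (ω t) - μ)^2 - s2)) := by
        intro ω hG
        by_contra hcon
        push_neg at hcon
        obtain ⟨h1, h2⟩ := hcon
        apply hG
        unfold cV
        rw [hsqrtV ω, h7, ← hμdef, ← hs2def]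
        rw [hemp_cost' ω] at h1
        have hb : cost ℓ x (empDist ω) - μ < s * ε + K * ε^2/6 :=
          (mul_lt_mul_iff_right₀ hTpos).1 h1
        have hsum2 : ∑ t, ((ℓ x (ω t) - μ)^2 - s2)
            = (T:ℝ) * ((varLoss ℓ x (empDist ω) + (cost ℓ x (empDist ω) - μ)^2) - s2) := by
          rw [Finset.sum_sub_distrib, hemp_sq ω μ, Finset.sum_const, Finset.card_univ,
            Fintype.card_fin, nsmul_eq_mul]
          ring
        rw [hsum2] at h2
        have hWub : varLoss ℓ x (empDist ω) + (cost ℓ x (empDist ω) - μ)^2 - s2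
            < (K*s) * ε + K^2 * ε^2/6 :=
          (mul_lt_mul_iff_right₀ hTpos).1 h2
        have hVub : varLoss ℓ x (empDist ω) ≤ (s + K*ε)^2 := by
          have h9 : (s + K*ε)^2 = s^2 + 2*(K*s*ε) + K^2*ε^2 := by ring
          have h10 : (0:ℝ) ≤ (cost ℓ x (empDist ω) - μ)^2 := sq_nonneg _
          have h11 : (0:ℝ) ≤ K*s*ε := by positivity
          have h12 : (0:ℝ) ≤ K^2*ε^2 := by positivity
          have h13 : (K*s)*ε = K*s*ε := by ring
          linarith [hssq]
        have hsV : Real.sqrt (varLoss ℓ x (empDist ω)) ≤ s + K*ε := by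
          calc Real.sqrt (varLoss ℓ x (empDist ω)) ≤ Real.sqrt ((s + K*ε)^2) :=
              Real.sqrt_le_sqrt hVub
            _ = s + K*ε := Real.sqrt_sq (by positivity)
        have hs8 : Real.sqrt (8 * a T / (T:ℝ) * s2) = 2*ε*s := by
          have he : 8 * a T / (T:ℝ) * s2 = (2*ε*s)^2 := by
            have : (2*ε*s)^2 = 4*ε^2*s^2 := by ring
            rw [this, hε2, hssq]
            ring
          rw [he, Real.sqrt_sq (by positivity)]
        rw [hs8]
        have h21 : ε * Real.sqrt (varLoss ℓ x (empDist ω)) ≤ ε * (s + K*ε) :=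
          mul_le_mul_of_nonneg_left hsV hεpos.le
        have h22 : ε*(s + K*ε) = ε*s + K*ε^2 := by ring
        have h23 : s*ε = ε*s := by ring
        linarith
      have hc := aux_probT_compl (T := T) hPsum (fun ω =>
        cV a ℓ x (empDist ω) T - Real.sqrt (8 * a T / (T:ℝ) * varLoss ℓ x P)
          - 7 * K / 3 * (a T / (T : ℝ)) ≤ cost ℓ x P)
      have hadd := aux_probT_le_add (T := T) hP0 hcov
      rw [hc]
      have h2e : Real.exp (-(a T)) = Real.exp (-a T) := by norm_num
      linarith [hH3, hH4, hadd]

end DDO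
end

section
/- Let (a_T) be a sequence of positive reals with a_T/T → r for some fixed r > 0. For any sequence of maps x̂_{KL,T} : 𝒫 → 𝒳 with x̂_{KL,T}(P) ∈ argmin_{x∈𝒳} ĉ_KL(x,P,T) for all P and T, the pair (ĉ_KL, x̂_KL) satisfies the prescription out-of-sample guarantee: limsup_{T→∞} (1/a_T)·log ℙ^∞( c(x̂_{KL,T}(P̂_T),P) > ĉ_KL*(P̂_T,T) ) ≤ −1 for every P ∈ 𝒫°, where ĉ_KL*(P,T) := min_{x∈𝒳} ĉ_KL(x,P,T). -/
open Filter Asymptotics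

namespace DDO

section AuxLemmas

open Finset

/-- count vector of a sample -/
private def cntv {d T : ℕ} (ω : Fin T → Fin d) : Fin d → ℕ :=
  fun i => (Finset.univ.filter fun t => ω t = i).card

private lemma prod_count {d T : ℕ} (ω : Fin T → Fin d) (Q : Fin d → ℝ) :
    ∏ t, Q (ω t) = ∏ i, Q i ^ cntv ω i := by
  rw [← Finset.prod_fiberwise' Finset.univ ω Q]
  simp [cntv, Finset.prod_const]

private lemma sum_cntv {d T : ℕ} (ω : Fin T → Fin d) : ∑ i, cntv ω i = T := by
  have := Finset.card_eq_sum_card_fiberwise (f := ω) (s := Finset.univ) (t := Finset.univ)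
    (fun t _ => Finset.mem_univ (ω t))
  simpa [cntv] using this.symm

private lemma cntv_le {d T : ℕ} (ω : Fin T → Fin d) (i : Fin d) : cntv ω i ≤ T := by
  simpa [cntv] using (Finset.card_filter_le Finset.univ (fun t => ω t = i)).trans_eq (by simp)

private lemma classBound {d T : ℕ} (hT : 0 < T) (k : Fin d → ℕ) (hk : ∑ i, k i = T) :
    ((Finset.univ.filter fun ω : Fin T → Fin d => cntv ω = k).card : ℝ)
      * ∏ i, ((k i : ℝ) / T) ^ k i ≤ 1 := by
  set Q : Fin d → ℝ := fun i => (k i : ℝ) / T with hQ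
  have hQnn : ∀ i, 0 ≤ Q i := fun i => by positivity
  have hQsum : ∑ i, Q i = 1 := by
    rw [hQ, ← Finset.sum_div]
    rw [show ((∑ i, (k i : ℝ)) = (T : ℝ)) by exact_mod_cast congrArg Nat.cast hk]
    field_simp
  calc ((Finset.univ.filter fun ω : Fin T → Fin d => cntv ω = k).card : ℝ)
        * ∏ i, Q i ^ k i
      = ∑ ω ∈ Finset.univ.filter fun ω : Fin T → Fin d => cntv ω = k,
          ∏ t, Q (ω t) := by
        rw [Finset.sum_congr rfl (fun ω hω => ?_), Finset.sum_const, nsmul_eq_mul]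
        rw [prod_count ω Q, (Finset.mem_filter.1 hω).2]
    _ ≤ ∑ ω : Fin T → Fin d, ∏ t, Q (ω t) := by
        apply Finset.sum_le_sum_of_subset_of_nonneg (Finset.filter_subset _ _)
        intro ω _ _
        exact Finset.prod_nonneg fun t _ => hQnn _
    _ = (∑ i, Q i) ^ T := (Fintype.sum_pow Q T).symm
    _ = 1 := by rw [hQsum, one_pow]

/-- real-valued relative entropy (valid when the second argument is positive) -/
private noncomputable def rEnt {d : ℕ} (Q P : Fin d → ℝ) : ℝ :=
  ∑ i, if Q i = 0 then 0 else Q i * Real.log (Q i / P i)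

private lemma coe_sum {ι : Type*} (s : Finset ι) (f : ι → ℝ) :
    ((∑ i ∈ s, f i : ℝ) : EReal) = ∑ i ∈ s, (f i : EReal) :=
  map_sum (⟨⟨Real.toEReal, EReal.coe_zero⟩, EReal.coe_add⟩ : ℝ →+ EReal) f s

private lemma relEnt_eq_coe {d : ℕ} (Q P : Fin d → ℝ) (hP : ∀ i, 0 < P i) :
    relEnt Q P = ((rEnt Q P : ℝ) : EReal) := by
  rw [rEnt, coe_sum, relEnt]
  refine Finset.sum_congr rfl fun i _ => ?_
  rw [klTerm]
  split_ifs with h h2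
  · simp
  · exact absurd h2 (hP i).ne'
  · rfl

private lemma expIk {d T : ℕ} (hT : 0 < T) (P : Fin d → ℝ) (hP : ∀ i, 0 < P i)
    (k : Fin d → ℕ) :
    ∏ i, P i ^ k i
      = Real.exp (-(T : ℝ) * rEnt (fun i => (k i : ℝ) / T) P)
        * ∏ i, ((k i : ℝ) / T) ^ k i := by
  have hT' : (T : ℝ) ≠ 0 := Nat.cast_ne_zero.2 hT.ne'
  rw [rEnt, Finset.mul_sum, Real.exp_sum, ← Finset.prod_mul_distrib]
  refine Finset.prod_congr rfl fun i _ => ?_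
  by_cases h : k i = 0
  · simp [h]
  · have hq : (0 : ℝ) < (k i : ℝ) / T := by
      have : (0 : ℝ) < (k i : ℝ) := by exact_mod_cast Nat.pos_of_ne_zero h
      positivity
    rw [if_neg hq.ne']
    have hlog : -(T : ℝ) * (((k i : ℝ) / T) * Real.log (((k i : ℝ) / T) / P i))
        = (k i : ℝ) * Real.log (P i) - (k i : ℝ) * Real.log ((k i : ℝ) / T) := by
      rw [Real.log_div hq.ne' (hP i).ne']
      field_simp
      ring
    rw [hlog, Real.exp_sub, Real.exp_nat_mul, Real.exp_nat_mul, Real.exp_log (hP i),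
      Real.exp_log hq, eq_comm, div_mul_cancel₀ _ (pow_ne_zero _ hq.ne')]

private lemma empDist_eq {d T : ℕ} (ω : Fin T → Fin d) :
    empDist ω = fun i => ((cntv ω i : ℝ) / T) := rfl

/-- Sanov-type upper bound: the probability of observing an empirical distribution at
relative entropy more than `r` from `P` is at most `(T+1)^d * exp(-T r)`. -/
private lemma sanov {d T : ℕ} (hT : 0 < T) {P : Fin d → ℝ} (hP : ∀ i, 0 < P i)
    {r : ℝ} (A : (Fin T → Fin d) → Prop)
    (hA : ∀ ω, A ω → (r : EReal) < relEnt (empDist ω) P) :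
    probT P T A ≤ ((T : ℝ) + 1) ^ d * Real.exp (-(T : ℝ) * r) := by
  classical
  have hstep1 : probT P T A ≤
      ∑ ω : Fin T → Fin d,
        (if (r : EReal) < relEnt (empDist ω) P then ∏ t, P (ω t) else 0) := by
    rw [probT]
    refine Finset.sum_le_sum fun ω _ => ?_
    by_cases h : A ω
    · rw [if_pos h, if_pos (hA ω h)]
    · rw [if_neg h]
      split_ifs with h2
      · exact Finset.prod_nonneg fun t _ => (hP _).le
      · exact le_rfl
  refine hstep1.trans ?_
  set KK : Finset (Fin d → ℕ) := Fintype.piFinset fun _ => Finset.range (T + 1) with hKK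
  have hmaps : ∀ ω : Fin T → Fin d, ω ∈ Finset.univ → cntv ω ∈ KK := by
    intro ω _
    rw [hKK, Fintype.mem_piFinset]
    intro i
    exact Finset.mem_range.2 (Nat.lt_succ_of_le (cntv_le ω i))
  rw [← Finset.sum_fiberwise_of_maps_to hmaps]
  have hinner : ∀ k ∈ KK,
      (∑ ω ∈ Finset.univ.filter fun ω : Fin T → Fin d => cntv ω = k,
        (if (r : EReal) < relEnt (empDist ω) P then ∏ t, P (ω t) else 0))
      ≤ Real.exp (-(T : ℝ) * r) := by
    intro k _
    rcases (Finset.univ.filter fun ω : Fin T → Fin d => cntv ω = k).eq_empty_or_nonempty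
      with he | ⟨ω₀, hω₀⟩
    · rw [he, Finset.sum_empty]; positivity
    · have hk0 : cntv ω₀ = k := (Finset.mem_filter.1 hω₀).2
      have hksum : ∑ i, k i = T := by rw [← hk0]; exact sum_cntv ω₀
      set Qk : Fin d → ℝ := fun i => (k i : ℝ) / T with hQk
      have hsum_eq :
          (∑ ω ∈ Finset.univ.filter fun ω : Fin T → Fin d => cntv ω = k,
            (if (r : EReal) < relEnt (empDist ω) P then ∏ t, P (ω t) else 0))
          = ((Finset.univ.filter fun ω : Fin T → Fin d => cntv ω = k).card : ℝ)
            * (if (r : EReal) < relEnt Qk P then ∏ i, P i ^ k i else 0) := by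
        rw [Finset.sum_congr rfl (fun ω hω => ?_), Finset.sum_const, nsmul_eq_mul]
        have hc : cntv ω = k := (Finset.mem_filter.1 hω).2
        have hemp : empDist ω = Qk := by rw [empDist_eq, hc]
        rw [hemp, prod_count ω P, hc]
      rw [hsum_eq]
      by_cases hcond : (r : EReal) < relEnt Qk P
      · rw [if_pos hcond]
        have hrlt : r < rEnt Qk P := by
          rw [relEnt_eq_coe Qk P hP] at hcond
          exact_mod_cast hcond
        calc ((Finset.univ.filter fun ω : Fin T → Fin d => cntv ω = k).card : ℝ)
              * ∏ i, P i ^ k i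
            = Real.exp (-(T : ℝ) * rEnt Qk P)
                * (((Finset.univ.filter fun ω : Fin T → Fin d => cntv ω = k).card : ℝ)
                  * ∏ i, Qk i ^ k i) := by
              rw [expIk hT P hP k]; ring
          _ ≤ Real.exp (-(T : ℝ) * rEnt Qk P) * 1 :=
              mul_le_mul_of_nonneg_left (classBound hT k hksum) (Real.exp_nonneg _)
          _ ≤ Real.exp (-(T : ℝ) * r) := by
              rw [mul_one]
              apply Real.exp_le_exp.2
              have : (0 : ℝ) ≤ (T : ℝ) := Nat.cast_nonneg T
              nlinarith
      · rw [if_neg hcond, mul_zero]; positivity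
  calc _ ≤ ∑ _k ∈ KK, Real.exp (-(T : ℝ) * r) := Finset.sum_le_sum hinner
    _ = (KK.card : ℝ) * Real.exp (-(T : ℝ) * r) := by
        rw [Finset.sum_const, nsmul_eq_mul]
    _ = ((T : ℝ) + 1) ^ d * Real.exp (-(T : ℝ) * r) := by
        rw [hKK, Fintype.card_piFinset]
        simp [Finset.card_range]

/-- If the decision-maker is disappointed, then the empirical distribution must be far
(in relative entropy) from the true distribution. -/
private lemma event_imp {X : Type*} {d : ℕ} (ℓ : X → Fin d → ℝ) (r : ℝ)
    (xhat : ℕ → (Fin d → ℝ) → X)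
    (hxhat : IsPrescriptor (fun x P (_ : ℕ) => cKL ℓ r x P) xhat)
    {P : Fin d → ℝ} (hP : P ∈ simplex d) {T : ℕ} (hT : 0 < T)
    (ω : Fin T → Fin d)
    (hev : cost ℓ (xhat T (empDist ω)) P >
      chatStar (fun x P (_ : ℕ) => cKL ℓ r x P) (empDist ω) T) :
    (r : EReal) < relEnt (empDist ω) P := by
  by_contra hle
  push_neg at hle
  set Q : Fin d → ℝ := empDist ω with hQdef
  have hQsimplex : Q ∈ simplex d := by
    constructor
    · intro i
      rw [hQdef, empDist_eq]
      positivity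
    · rw [hQdef, empDist_eq]
      have hTn : (T : ℝ) ≠ 0 := Nat.cast_ne_zero.2 hT.ne'
      rw [← Finset.sum_div]
      rw [show ((∑ i, (cntv ω i : ℝ)) = (T : ℝ)) by exact_mod_cast congrArg Nat.cast (sum_cntv ω)]
      field_simp
  set x0 : X := xhat T Q with hx0
  have hlb : cKL ℓ r x0 Q ≤ chatStar (fun x P (_ : ℕ) => cKL ℓ r x P) Q T := by
    apply le_csInf ⟨_, Set.mem_range_self x0⟩
    rintro y ⟨x, rfl⟩
    exact hxhat T Q hQsimplex x
  have hbdd : BddAbove {y | ∃ P' ∈ simplex d, relEnt Q P' ≤ (r : EReal) ∧ y = cost ℓ x0 P'} := by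
    refine ⟨∑ i, |ℓ x0 i|, ?_⟩
    rintro y ⟨P', hP', _, rfl⟩
    rw [cost]
    refine Finset.sum_le_sum fun i _ => ?_
    have h1 : P' i ≤ 1 := by
      have := Finset.single_le_sum (fun j _ => hP'.1 j) (Finset.mem_univ i)
      rw [hP'.2] at this
      exact this
    calc ℓ x0 i * P' i ≤ |ℓ x0 i| * P' i :=
          mul_le_mul_of_nonneg_right (le_abs_self _) (hP'.1 i)
      _ ≤ |ℓ x0 i| * 1 := mul_le_mul_of_nonneg_left h1 (abs_nonneg _)
      _ = |ℓ x0 i| := mul_one _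
  have hmem : cost ℓ x0 P ∈
      {y | ∃ P' ∈ simplex d, relEnt Q P' ≤ (r : EReal) ∧ y = cost ℓ x0 P'} :=
    ⟨P, hP, hle, rfl⟩
  have hcost : cost ℓ x0 P ≤ cKL ℓ r x0 Q := le_csSup hbdd hmem
  exact absurd (hcost.trans hlb) (not_le.2 hev)

/-- The purely analytic eventual estimate. -/
private lemma eventual_bound (d : ℕ) (a : ℕ → ℝ) (r ε : ℝ) (hr : 0 < r)
    (hε0 : 0 < ε) (hε1 : ε < 1)
    (ha_r : Tendsto (fun T : ℕ => a T / (T : ℝ)) atTop (nhds r)) :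
    ∀ᶠ T : ℕ in atTop,
      ((T : ℝ) + 1) ^ d * Real.exp (-(T : ℝ) * r) ≤ Real.exp ((-1 + ε) * a T) := by
  set δ : ℝ := ε * r / (2 * (1 - ε)) with hδdef
  have h1ε : (0 : ℝ) < 1 - ε := by linarith
  have hδpos : 0 < δ := by positivity
  set c₀ : ℝ := (ε * r) / (4 * ((d : ℝ) + 1)) with hc₀def
  have hc₀pos : 0 < c₀ := by positivity
  have h2 : ∀ᶠ T : ℕ in atTop, a T / (T : ℝ) < r + δ :=
    ha_r.eventually_lt_const (lt_add_of_pos_right r hδpos)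
  have htend : Tendsto (fun T : ℕ => (T : ℝ) + 1) atTop atTop :=
    tendsto_atTop_add_const_right _ 1 tendsto_natCast_atTop_atTop
  have hlogo : (fun T : ℕ => Real.log ((T : ℝ) + 1)) =o[atTop] (fun T : ℕ => (T : ℝ) + 1) :=
    Real.isLittleO_log_id_atTop.comp_tendsto htend
  have h3 : ∀ᶠ T : ℕ in atTop,
      ‖Real.log ((T : ℝ) + 1)‖ ≤ c₀ * ‖(T : ℝ) + 1‖ := hlogo.bound hc₀pos
  filter_upwards [eventually_ge_atTop 1, h2, h3] with T hT1 hT2 hT3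
  have hT0 : (0 : ℝ) < (T : ℝ) := by exact_mod_cast hT1
  have hTp : (0 : ℝ) < (T : ℝ) + 1 := by positivity
  have haT : a T ≤ (r + δ) * T := by
    rw [div_lt_iff₀ hT0] at hT2
    exact hT2.le
  have hlogb : Real.log ((T : ℝ) + 1) ≤ c₀ * ((T : ℝ) + 1) := by
    rw [Real.norm_eq_abs, Real.norm_eq_abs, abs_of_pos hTp] at hT3
    exact (le_abs_self _).trans hT3
  have hT2T : (T : ℝ) + 1 ≤ 2 * T := by
    have : (1 : ℝ) ≤ (T : ℝ) := by exact_mod_cast hT1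
    linarith
  have e1 : (d : ℝ) * Real.log ((T : ℝ) + 1) ≤ (ε * r / 2) * T := by
    have hlog2 : Real.log ((T : ℝ) + 1) ≤ c₀ * (2 * T) :=
      hlogb.trans (mul_le_mul_of_nonneg_left hT2T hc₀pos.le)
    calc (d : ℝ) * Real.log ((T : ℝ) + 1) ≤ (d : ℝ) * (c₀ * (2 * T)) :=
          mul_le_mul_of_nonneg_left hlog2 (Nat.cast_nonneg d)
      _ ≤ (ε * r / 2) * T := by
          rw [hc₀def]
          have hd1 : (0 : ℝ) < (d : ℝ) + 1 := by positivity
          rw [div_mul_eq_mul_div, mul_div_assoc', div_le_iff₀ (by positivity)]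
          have hεrT : 0 ≤ ε * r * (T : ℝ) := by positivity
          nlinarith [hεrT, hd1, (Nat.cast_nonneg d : (0:ℝ) ≤ (d:ℝ))]
  have hpow : ((T : ℝ) + 1) ^ d = Real.exp ((d : ℝ) * Real.log ((T : ℝ) + 1)) := by
    rw [Real.exp_nat_mul, Real.exp_log hTp]
  rw [hpow, ← Real.exp_add, Real.exp_le_exp]
  have hδe : (1 - ε) * δ = ε * r / 2 := by
    rw [hδdef]
    field_simp
  nlinarith [mul_nonneg h1ε.le (by linarith : (0 : ℝ) ≤ (r + δ) * T - a T)]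

end AuxLemmas

/-- In the exponential regime (`a_T/T → r > 0`), the KL-DRO predictor together with
any associated argmin prescriptor satisfies the prescription out-of-sample guarantee. -/
theorem stmt_10 {X : Type*} [MetricSpace X] [CompactSpace X] {d : ℕ}
    (ℓ : X → Fin d → ℝ) (hℓ : ∀ i, Continuous fun x => ℓ x i)
    (a : ℕ → ℝ) (ha_pos : ∀ T, 0 < a T)
    (ha_top : Tendsto a atTop atTop)
    (r : ℝ) (hr : 0 < r)
    (ha_r : Tendsto (fun T : ℕ => a T / (T : ℝ)) atTop (nhds r))
    (xhat : ℕ → (Fin d → ℝ) → X)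
    (hxhat : IsPrescriptor (fun x P (_ : ℕ) => cKL ℓ r x P) xhat) :
    PrescOOSGuarantee ℓ a (fun x P (_ : ℕ) => cKL ℓ r x P) xhat := by
  intro P hP ε hε
  set ε' : ℝ := min ε (1 / 2) with hε'def
  have hε'0 : 0 < ε' := lt_min hε (by norm_num)
  have hε'1 : ε' < 1 := lt_of_le_of_lt (min_le_right _ _) (by norm_num)
  have hPpos : ∀ i, 0 < P i := hP.1
  have hPsimplex : P ∈ simplex d := ⟨fun i => (hP.1 i).le, hP.2⟩
  have hmain : ∀ᶠ T : ℕ in atTop,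
      probT P T (fun ω =>
        cost ℓ (xhat T (empDist ω)) P >
          chatStar (fun x P (_ : ℕ) => cKL ℓ r x P) (empDist ω) T) ≤
        Real.exp ((-1 + ε') * a T) := by
    filter_upwards [eventually_ge_atTop 1, eventual_bound d a r ε' hr hε'0 hε'1 ha_r]
      with T hT1 hbound
    have hT : 0 < T := hT1
    have hs := sanov hT hPpos
      (fun ω => cost ℓ (xhat T (empDist ω)) P >
        chatStar (fun x P (_ : ℕ) => cKL ℓ r x P) (empDist ω) T)
      (fun ω hev => event_imp ℓ r xhat hxhat hPsimplex hT ω hev)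
    exact hs.trans hbound
  filter_upwards [hmain] with T hTm
  refine hTm.trans (Real.exp_le_exp.2 ?_)
  have := ha_pos T
  have hle : ε' ≤ ε := min_le_left _ _
  nlinarith

end DDO
end

section
/- Consider the superexponential regime in which a_T/T → ∞. The pair (ĉ_R, x̂_R), where ĉ_R(x,P,T) := max_{i∈Σ} ℓ(x,i) is the robust predictor and x̂_{R,T}(P) ∈ argmin_{x∈𝒳} max_{i∈Σ} ℓ(x,i), is a prescriptor satisfying the prescription out-of-sample guarantee, and for every prescriptor pair (ĉ, x̂) (with ĉ ∈ 𝒞 regular) satisfying the prescription out-of-sample guarantee one has (ĉ_R, x̂_R) ⪯_X̂ (ĉ, x̂); that is, (ĉ_R, x̂_R) is a strongly optimal prescriptor in the superexponential regime. -/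
open Filter Asymptotics

namespace DDO

section
variable {X : Type*} [MetricSpace X] [CompactSpace X] [Nonempty X] {d : ℕ}

lemma bound_exists (ℓ : X → Fin d → ℝ) (hℓ : ∀ i, Continuous fun x => ℓ x i) :
    ∃ M : ℝ, 0 ≤ M ∧ ∀ x i, |ℓ x i| ≤ M := by
  have h : ∀ i : Fin d, ∃ C : ℝ, 0 ≤ C ∧ ∀ x, |ℓ x i| ≤ C := by
    intro i
    obtain ⟨x₀, -, hx₀⟩ := isCompact_univ.exists_isMaxOn Set.univ_nonempty
      ((hℓ i).abs.continuousOn (s := Set.univ))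
    exact ⟨|ℓ x₀ i|, abs_nonneg _, fun x => hx₀ (Set.mem_univ x)⟩
  choose C hC0 hC using h
  refine ⟨∑ i, C i, Finset.sum_nonneg fun i _ => hC0 i, fun x i => ?_⟩
  exact le_trans (hC i x) (Finset.single_le_sum (f := C) (fun j _ => hC0 j) (Finset.mem_univ i))

end
section
variable {X : Type*} {d : ℕ}

lemma cR_le {ℓ : X → Fin d → ℝ} {x : X} {M : ℝ} (hd : 0 < d)
    (hM : ∀ i, ℓ x i ≤ M) : cR ℓ x ≤ M :=
  haveI : Nonempty (Fin d) := ⟨⟨0, hd⟩⟩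
  ciSup_le hM

lemma le_cR {ℓ : X → Fin d → ℝ} {x : X} (i : Fin d) : ℓ x i ≤ cR ℓ x :=
  le_ciSup (Set.Finite.bddAbove (Set.finite_range _)) i

lemma cR_abs_le {ℓ : X → Fin d → ℝ} {x : X} {M : ℝ} (hd : 0 < d)
    (hM : ∀ i, |ℓ x i| ≤ M) : |cR ℓ x| ≤ M := by
  rw [abs_le]
  refine ⟨le_trans ?_ (le_cR ⟨0, hd⟩), cR_le hd fun i => (abs_le.1 (hM i)).2⟩
  exact (abs_le.1 (hM ⟨0, hd⟩)).1

lemma cost_le_cR {ℓ : X → Fin d → ℝ} {x : X} {P : Fin d → ℝ}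
    (hP : P ∈ simplex d) : cost ℓ x P ≤ cR ℓ x :=
  calc cost ℓ x P = ∑ i, ℓ x i * P i := rfl
    _ ≤ ∑ i, cR ℓ x * P i :=
        Finset.sum_le_sum fun i _ => mul_le_mul_of_nonneg_right (le_cR i) (hP.1 i)
    _ = cR ℓ x := by rw [← Finset.mul_sum, hP.2, mul_one]

lemma cost_ge {ℓ : X → Fin d → ℝ} {x : X} {P : Fin d → ℝ} {M : ℝ}
    (hM : ∀ i, -M ≤ ℓ x i) (hP : P ∈ simplex d) : -M ≤ cost ℓ x P :=
  calc (-M : ℝ) = ∑ i, -M * P i := by rw [← Finset.mul_sum, hP.2, mul_one]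
    _ ≤ ∑ i, ℓ x i * P i :=
        Finset.sum_le_sum fun i _ => mul_le_mul_of_nonneg_right (hM i) (hP.1 i)

end
section
variable {d : ℕ}

lemma empDist_mem_simplex {T : ℕ} (hT : 0 < T) (ω : Fin T → Fin d) :
    empDist ω ∈ simplex d := by
  classical
  constructor
  · intro i
    exact div_nonneg (Nat.cast_nonneg _) (Nat.cast_nonneg _)
  · have hcard : ∑ i : Fin d, ((Finset.univ.filter (fun t => ω t = i)).card : ℝ)
        = (T : ℝ) := by
      rw [← Nat.cast_sum]
      norm_cast
      have h := Finset.card_eq_sum_card_fiberwise (s := (Finset.univ : Finset (Fin T)))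
        (t := (Finset.univ : Finset (Fin d))) (f := ω) (fun t _ => Finset.mem_univ (ω t))
      simpa using h.symm
    rw [show (∑ i, empDist ω i) = (∑ i : Fin d, ((Finset.univ.filter (fun t => ω t = i)).card : ℝ)) / T by
      rw [Finset.sum_div]; rfl]
    rw [hcard, div_self (by positivity)]

lemma probT_ge {T : ℕ} (P : Fin d → ℝ) (hP : ∀ i, 0 ≤ P i)
    (A : (Fin T → Fin d) → Prop) (ω₀ : Fin T → Fin d) (h : A ω₀)
    {p : ℝ} (hp : 0 ≤ p) (hple : ∀ i, p ≤ P i) : p ^ T ≤ probT P T A := by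
  classical
  have h1 : p ^ T ≤ ∏ t : Fin T, P (ω₀ t) := by
    have : p ^ T = ∏ _t : Fin T, p := by simp
    rw [this]
    exact Finset.prod_le_prod (fun _ _ => hp) (fun t _ => hple (ω₀ t))
  have h2 : (if A ω₀ then ∏ t, P (ω₀ t) else 0) ≤ probT P T A := by
    refine Finset.single_le_sum (f := fun ω => if A ω then ∏ t, P (ω t) else 0)
      (fun ω _ => ?_) (Finset.mem_univ ω₀)
    split
    · exact Finset.prod_nonneg fun t _ => hP (ω t)
    · exact le_rfl
  rw [if_pos h] at h2
  exact le_trans h1 h2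

end
section
variable {d : ℕ}

lemma exists_empDist_close (hd : 0 < d) {P : Fin d → ℝ} (hP : P ∈ simplex d)
    {T : ℕ} (hT : 0 < T) :
    ∃ ω : Fin T → Fin d, ∀ i, |empDist ω i - P i| ≤ 1 / T := by
  classical
  set Q : ℕ → ℝ := fun j => if h : j < d then P ⟨j, h⟩ else 0 with hQdef
  have hQ0 : ∀ j, 0 ≤ Q j := by
    intro j; simp only [hQdef]; split
    · exact hP.1 _
    · exact le_rfl
  set S : ℕ → ℝ := fun k => ∑ j ∈ Finset.range k, Q j with hSdef
  have hS0 : ∀ k, 0 ≤ S k := fun k => Finset.sum_nonneg fun j _ => hQ0 j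
  have hSmono : Monotone S := fun k m h =>
    Finset.sum_le_sum_of_subset_of_nonneg (Finset.range_subset_range.2 h) (fun j _ _ => hQ0 j)
  have hSd : S d = 1 := by
    have h1 : ∑ i : Fin d, Q (i : ℕ) = ∑ j ∈ Finset.range d, Q j :=
      Fin.sum_univ_eq_sum_range (fun j => Q j) d
    have h2 : ∀ i : Fin d, Q (i : ℕ) = P i := by
      intro i; simp only [hQdef]; rw [dif_pos i.isLt]
    rw [hSdef]
    simp only [← h1, h2]
    exact hP.2
  set c : ℕ → ℕ := fun k => ⌊(T : ℝ) * S k⌋₊ with hcdef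
  have hc0 : c 0 = 0 := by simp [hcdef, hSdef]
  have hcd : c d = T := by simp [hcdef, hSd]
  have hcmono : Monotone c := fun k m h =>
    Nat.floor_mono (mul_le_mul_of_nonneg_left (hSmono h) (Nat.cast_nonneg T))
  have hcle : ∀ k, (c k : ℝ) ≤ (T : ℝ) * S k := fun k =>
    Nat.floor_le (mul_nonneg (Nat.cast_nonneg T) (hS0 k))
  have hclt : ∀ k, (T : ℝ) * S k - 1 < (c k : ℝ) := by
    intro k
    have := Nat.lt_floor_add_one ((T : ℝ) * S k)
    push_cast at this ⊢
    linarith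
  have hcT : ∀ k, k ≤ d → c k ≤ T := fun k hk => hcd ▸ hcmono hk
  -- the sample path
  have hne : ∀ t : Fin T, (Finset.univ.filter fun i : Fin d => c i ≤ (t : ℕ)).Nonempty := by
    intro t
    refine ⟨⟨0, hd⟩, Finset.mem_filter.2 ⟨Finset.mem_univ _, ?_⟩⟩
    simp [hc0]
  set ω : Fin T → Fin d := fun t =>
    (Finset.univ.filter fun i : Fin d => c i ≤ (t : ℕ)).max' (hne t) with hωdef
  have fiber : ∀ (t : Fin T) (i : Fin d),
      ω t = i ↔ (c i ≤ (t : ℕ) ∧ (t : ℕ) < c ((i : ℕ) + 1)) := by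
    intro t i
    constructor
    · rintro rfl
      have hmem := Finset.max'_mem _ (hne t)
      have h1 : c (ω t : ℕ) ≤ (t : ℕ) := (Finset.mem_filter.1 hmem).2
      refine ⟨h1, ?_⟩
      by_contra hcon
      push_neg at hcon
      have hlt : (ω t : ℕ) + 1 < d := by
        by_contra hge
        push_neg at hge
        have h5 : T ≤ c ((ω t : ℕ) + 1) := hcd ▸ hcmono hge
        have h6 := t.isLt
        omega
      have hj : (⟨(ω t : ℕ) + 1, hlt⟩ : Fin d) ∈
          (Finset.univ.filter fun i : Fin d => c i ≤ (t : ℕ)) :=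
        Finset.mem_filter.2 ⟨Finset.mem_univ _, hcon⟩
      have h7 := Finset.le_max' _ _ hj
      rw [Fin.le_def] at h7
      simp only [hωdef] at h7 ⊢
      omega
    · rintro ⟨h1, h2⟩
      have hi : i ∈ (Finset.univ.filter fun j : Fin d => c j ≤ (t : ℕ)) :=
        Finset.mem_filter.2 ⟨Finset.mem_univ _, h1⟩
      have hle : i ≤ ω t := Finset.le_max' _ _ hi
      have hmem := Finset.max'_mem _ (hne t)
      have h3 : c (ω t : ℕ) ≤ (t : ℕ) := (Finset.mem_filter.1 hmem).2
      rcases eq_or_lt_of_le hle with h | h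
      · exact h.symm
      · exfalso
        rw [Fin.lt_def] at h
        have h8 : (i : ℕ) + 1 ≤ (ω t : ℕ) := h
        have h9 := hcmono h8
        omega
  -- fiber cardinality
  have hcard : ∀ i : Fin d,
      (Finset.univ.filter fun t : Fin T => ω t = i).card = c ((i : ℕ) + 1) - c (i : ℕ) := by
    intro i
    have hfe : (Finset.univ.filter fun t : Fin T => ω t = i) =
        (Finset.univ.filter fun t : Fin T => c (i : ℕ) ≤ (t : ℕ) ∧ (t : ℕ) < c ((i : ℕ) + 1)) := by
      ext t
      simp only [Finset.mem_filter, Finset.mem_univ, true_and]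
      exact fiber t i
    rw [hfe]
    have himg : (Finset.univ.filter fun t : Fin T =>
          c (i : ℕ) ≤ (t : ℕ) ∧ (t : ℕ) < c ((i : ℕ) + 1)).image Fin.val =
        Finset.Ico (c (i : ℕ)) (c ((i : ℕ) + 1)) := by
      ext a
      simp only [Finset.mem_image, Finset.mem_filter, Finset.mem_univ, true_and,
        Finset.mem_Ico]
      constructor
      · rintro ⟨t, ⟨ht1, ht2⟩, rfl⟩; exact ⟨ht1, ht2⟩
      · rintro ⟨ha1, ha2⟩
        have haT : a < T := lt_of_lt_of_le ha2 (hcT _ i.isLt)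
        exact ⟨⟨a, haT⟩, ⟨ha1, ha2⟩, rfl⟩
    have := Finset.card_image_of_injective
      (Finset.univ.filter fun t : Fin T =>
        c (i : ℕ) ≤ (t : ℕ) ∧ (t : ℕ) < c ((i : ℕ) + 1)) Fin.val_injective
    rw [himg] at this
    rw [← this, Nat.card_Ico]
  refine ⟨ω, fun i => ?_⟩
  have hkey : empDist ω i = ((c ((i : ℕ) + 1) : ℝ) - (c (i : ℕ) : ℝ)) / T := by
    unfold empDist
    rw [hcard i]
    rw [Nat.cast_sub (hcmono (Nat.le_succ _))]
  have hPi : P i = S ((i : ℕ) + 1) - S (i : ℕ) := by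
    have : S ((i : ℕ) + 1) = S (i : ℕ) + Q (i : ℕ) := Finset.sum_range_succ _ _
    have hQi : Q (i : ℕ) = P i := by simp only [hQdef]; rw [dif_pos i.isLt]
    rw [this, hQi]; ring
  have hT0 : (0 : ℝ) < T := by exact_mod_cast hT
  rw [hkey]
  have hnum : |(c ((i : ℕ) + 1) : ℝ) - (c (i : ℕ) : ℝ) - (T : ℝ) * P i| ≤ 1 := by
    have b1 := hcle ((i : ℕ) + 1)
    have b2 := hclt ((i : ℕ) + 1)
    have b3 := hcle (i : ℕ)
    have b4 := hclt (i : ℕ)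
    rw [abs_le, hPi]
    constructor <;> nlinarith
  calc |((c ((i : ℕ) + 1) : ℝ) - (c (i : ℕ) : ℝ)) / T - P i|
      = |(c ((i : ℕ) + 1) : ℝ) - (c (i : ℕ) : ℝ) - (T : ℝ) * P i| / T := by
        rw [← abs_of_pos hT0, ← abs_div]
        congr 1
        field_simp
        rw [abs_of_pos hT0]; ring
    _ ≤ 1 / T := by gcongr

end
section
variable {X : Type*} [MetricSpace X] {d : ℕ}

lemma convex_simplex (d : ℕ) : Convex ℝ (simplex d) :=
  convex_stdSimplex ℝ (Fin d)

lemma chat_lipschitz {chat : X → (Fin d → ℝ) → ℕ → ℝ}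
    (hreg : IsRegularPredictor d chat) :
    ∃ K : ℝ, 0 ≤ K ∧ ∀ (T : ℕ) (x : X), ∀ P ∈ simplex d, ∀ Q ∈ simplex d,
      |chat x P T - chat x Q T| ≤ K * dist P Q := by
  obtain ⟨D, hD, ⟨K, hK⟩, -⟩ := hreg.differentiableDeriv
  refine ⟨max K 0, le_max_right _ _, fun T x P hP Q hQ => ?_⟩
  have := Convex.norm_image_sub_le_of_norm_hasFDerivWithin_le
    (f := fun R => chat x R T) (f' := fun R => D x R T) (C := max K 0)
    (fun R hR => hD T x R hR) (fun R hR => le_max_of_le_left (hK T x R hR))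
    (convex_simplex d) hQ hP
  rw [← Real.norm_eq_abs, ← dist_eq_norm]
  calc dist (chat x P T) (chat x Q T) = ‖chat x P T - chat x Q T‖ := dist_eq_norm _ _
    _ ≤ max K 0 * ‖P - Q‖ := this
    _ = max K 0 * dist P Q := by rw [dist_eq_norm]
end
section
variable {X : Type*} [MetricSpace X] [CompactSpace X] {d : ℕ}

lemma key_lb (ℓ : X → Fin d → ℝ) (hℓ : ∀ i, Continuous fun x => ℓ x i)
    (a : ℕ → ℝ) (ha_sup : Tendsto (fun T : ℕ => a T / (T : ℝ)) atTop atTop)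
    (chat : X → (Fin d → ℝ) → ℕ → ℝ) (xhat : ℕ → (Fin d → ℝ) → X)
    (hreg : IsRegularPredictor d chat)
    (hguar : PrescOOSGuarantee ℓ a chat xhat)
    {P : Fin d → ℝ} (hP : P ∈ simplexInt d) {η : ℝ} (hη : 0 < η) :
    ∀ᶠ T : ℕ in atTop,
      sInf (Set.range fun x : X => cR ℓ x) - η ≤ chatStar chat P T := by
  classical
  haveI : Nonempty X := ⟨xhat 0 P⟩
  have hd : 0 < d := by
    rcases Nat.eq_zero_or_pos d with h | h
    · exfalso; have := hP.2; subst h; simp at this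
    · exact h
  haveI : Nonempty (Fin d) := ⟨⟨0, hd⟩⟩
  have hd0 : (0 : ℝ) < d := by exact_mod_cast hd
  obtain ⟨M, hM0, hM⟩ := bound_exists ℓ hℓ
  obtain ⟨K, hK0, hKlip⟩ := chat_lipschitz hreg
  obtain ⟨K₀, hK₀⟩ := hreg.unifBounded
  set σ : ℝ := min (1/2) (η / (4*M+4)) with hσdef
  have hσ0 : 0 < σ := lt_min (by norm_num) (by positivity)
  have hσhalf : σ ≤ 1/2 := min_le_left _ _
  have hσM : 2*σ*M ≤ η/2 := by
    have h1 : σ ≤ η / (4*M+4) := min_le_right _ _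
    have h2 : 0 < 4*M+4 := by linarith
    rw [le_div_iff₀ h2] at h1
    nlinarith
  have hσd0 : 0 < σ / d := by positivity
  have hσd1 : σ / d < 1 := by
    have : σ / d ≤ σ := by
      rw [div_le_iff₀ hd0]
      nlinarith [(by exact_mod_cast hd : (1:ℝ) ≤ d)]
    linarith
  set P' : Fin d → (Fin d → ℝ) := fun i j => σ/d + if j = i then 1-σ else 0 with hP'def
  have hP'mem : ∀ i, P' i ∈ simplexInt d := by
    intro i
    constructor
    · intro j
      have : (0:ℝ) ≤ if j = i then 1-σ else 0 := by split <;> linarith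
      simp only [hP'def]
      linarith
    · simp only [hP'def]
      rw [Finset.sum_add_distrib, Finset.sum_const, Finset.sum_ite_eq' Finset.univ i
        (fun _ => (1:ℝ)-σ), if_pos (Finset.mem_univ i), Finset.card_univ, Fintype.card_fin]
      rw [nsmul_eq_mul, mul_div_assoc', mul_div_cancel_left₀ _ hd0.ne']; ring
  have hP'low : ∀ i j, σ/d ≤ P' i j := by
    intro i j
    have : (0:ℝ) ≤ if j = i then 1-σ else 0 := by split <;> linarith
    simp only [hP'def]
    linarith
  -- the disappointment event is eventually empty under every P' i
  have hfree : ∀ᶠ T : ℕ in atTop, ∀ (i : Fin d) (ω : Fin T → Fin d),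
      cost ℓ (xhat T (empDist ω)) (P' i) ≤ chatStar chat (empDist ω) T := by
    rw [eventually_all]
    intro i
    have hg := hguar (P' i) (hP'mem i) (1/2) (by norm_num)
    have hs := ha_sup.eventually_gt_atTop (2 * (-Real.log (σ/d)))
    filter_upwards [hg, hs, eventually_ge_atTop 1] with T hgT hsT hT1 ω
    by_contra hcon
    push_neg at hcon
    have h1 : (σ/d)^T ≤ probT (P' i) T (fun ω' =>
        cost ℓ (xhat T (empDist ω')) (P' i) > chatStar chat (empDist ω') T) :=
      probT_ge _ (fun j => ((hP'mem i).1 j).le) _ ω hcon hσd0.le (hP'low i)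
    have h3 : Real.exp ((-1 + 1/2) * a T) < (σ/d)^T := by
      have he : (σ/d)^T = Real.exp ((T:ℝ) * Real.log (σ/d)) := by
        rw [Real.exp_nat_mul, Real.exp_log hσd0]
      rw [he]
      apply Real.exp_lt_exp.2
      have hT0 : (0:ℝ) < T := by exact_mod_cast hT1
      rw [lt_div_iff₀ hT0] at hsT
      nlinarith
    linarith
  have hKsmall : ∀ᶠ T : ℕ in atTop, K * (1/(T:ℝ)) ≤ η/2 := by
    have h0 : Tendsto (fun T : ℕ => K * (1/(T:ℝ))) atTop (nhds 0) := by
      have := tendsto_one_div_atTop_nhds_zero_nat.const_mul K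
      simpa using this
    exact h0.eventually (eventually_le_nhds (by linarith))
  filter_upwards [hfree, hKsmall, eventually_ge_atTop 1] with T hfreeT hKT hT1
  have hT0 : 0 < T := hT1
  obtain ⟨ω, hω⟩ := exists_empDist_close hd ⟨fun i => (hP.1 i).le, hP.2⟩ hT0
  set Qe : Fin d → ℝ := empDist ω with hQedef
  have hQe : Qe ∈ simplex d := empDist_mem_simplex hT0 ω
  have hdist : dist Qe P ≤ 1/(T:ℝ) := by
    rw [dist_pi_le_iff (by positivity)]
    intro i
    rw [Real.dist_eq]
    exact hω i
  set x0 : X := xhat T Qe with hx0def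
  obtain ⟨im, him⟩ := Finite.exists_max (fun i => ℓ x0 i)
  -- step 1: cost under P' im is close to the robust cost
  have hsum : -((d:ℝ)*M) ≤ ∑ j, ℓ x0 j := by
    calc -((d:ℝ)*M) = ∑ _j : Fin d, -M := by
          rw [Finset.sum_const, Finset.card_univ, Fintype.card_fin, nsmul_eq_mul]; ring
      _ ≤ ∑ j, ℓ x0 j := Finset.sum_le_sum fun j _ => (abs_le.1 (hM x0 j)).1
  have hcost_eq : cost ℓ x0 (P' im) = (σ/d) * (∑ j, ℓ x0 j) + (1-σ) * ℓ x0 im := by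
    simp only [cost, hP'def, mul_add, mul_ite, mul_zero]
    rw [Finset.sum_add_distrib, Finset.sum_ite_eq' Finset.univ im
      (fun j => ℓ x0 j * (1-σ)), if_pos (Finset.mem_univ im), ← Finset.sum_mul]
    ring
  have hcR_eq : cR ℓ x0 = ℓ x0 im := le_antisymm (cR_le hd him) (le_cR im)
  have h1 : cR ℓ x0 - 2*σ*M ≤ cost ℓ x0 (P' im) := by
    rw [hcost_eq, hcR_eq]
    have hb1 : (σ/d) * (-((d:ℝ)*M)) ≤ (σ/d) * (∑ j, ℓ x0 j) :=
      mul_le_mul_of_nonneg_left hsum hσd0.le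
    have hb2 : (σ/d) * (-((d:ℝ)*M)) = -(σ*M) := by field_simp
    have hb3 : ℓ x0 im ≤ M := (abs_le.1 (hM x0 im)).2
    nlinarith
  -- step 2: event-free gives cost ≤ chatStar at Qe
  have h2 : cost ℓ x0 (P' im) ≤ chatStar chat Qe T := hfreeT im ω
  -- step 3: Lipschitz transfer from Qe to P
  have hPs : P ∈ simplex d := ⟨fun i => (hP.1 i).le, hP.2⟩
  have h3 : chatStar chat Qe T - K * (1/(T:ℝ)) ≤ chatStar chat P T := by
    apply le_csInf (Set.range_nonempty _)
    rintro y ⟨x, rfl⟩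
    have hb : chatStar chat Qe T ≤ chat x Qe T :=
      csInf_le ⟨-K₀, by rintro z ⟨x', rfl⟩; linarith [(abs_le.1 (hK₀ T x' Qe hQe)).1]⟩
        ⟨x, rfl⟩
    have hl : |chat x Qe T - chat x P T| ≤ K * dist Qe P := hKlip T x Qe hQe P hPs
    have hKd : K * dist Qe P ≤ K * (1/(T:ℝ)) := mul_le_mul_of_nonneg_left hdist hK0
    have h5 := (abs_le.1 hl).2
    linarith
  -- step 4: robust cost at x0 dominates the robust optimum
  have h4 : sInf (Set.range fun x : X => cR ℓ x) ≤ cR ℓ x0 :=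
    csInf_le ⟨-M, by rintro z ⟨x', rfl⟩; linarith [(abs_le.1 (cR_abs_le hd (hM x'))).1]⟩
      ⟨x0, rfl⟩
  linarith
end
/-- In the superexponential regime (`a_T/T → ∞`), the pair `(ĉ_R, x̂_R)` built from
the robust predictor is a prescriptor satisfying the prescription out-of-sample
guarantee, and it is preferred (`⪯_X̂`) to every prescriptor pair (with regular
predictor) satisfying the guarantee: it is a strongly optimal prescriptor. -/
theorem stmt_12 {X : Type*} [MetricSpace X] [CompactSpace X] {d : ℕ}
    (ℓ : X → Fin d → ℝ) (hℓ : ∀ i, Continuous fun x => ℓ x i)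
    (a : ℕ → ℝ) (ha_pos : ∀ T, 0 < a T)
    (ha_top : Tendsto a atTop atTop)
    (ha_sup : Tendsto (fun T : ℕ => a T / (T : ℝ)) atTop atTop)
    (xhatR : ℕ → (Fin d → ℝ) → X)
    (hxhatR : IsPrescriptor (fun x (_ : Fin d → ℝ) (_ : ℕ) => cR ℓ x) xhatR) :
    IsRegularPredictor d (fun x (_ : Fin d → ℝ) (_ : ℕ) => cR ℓ x) ∧
      PrescOOSGuarantee ℓ a (fun x (_ : Fin d → ℝ) (_ : ℕ) => cR ℓ x) xhatR ∧
      ∀ (chat : X → (Fin d → ℝ) → ℕ → ℝ) (xhat : ℕ → (Fin d → ℝ) → X),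
        IsRegularPredictor d chat → IsPrescriptor chat xhat →
          PrescOOSGuarantee ℓ a chat xhat →
            PrescOrder ℓ (fun x (_ : Fin d → ℝ) (_ : ℕ) => cR ℓ x) chat := by
  classical
  haveI : Nonempty X := ⟨xhatR 0 (fun _ => 0)⟩
  obtain ⟨M, hM0, hM⟩ := bound_exists ℓ hℓ
  have hdd : ∀ {P : Fin d → ℝ}, P ∈ simplex d → 0 < d := by
    intro P hPs
    rcases Nat.eq_zero_or_pos d with h | h
    · exfalso; have := hPs.2; subst h; simp at this
    · exact h
  have hstar : ∀ (P : Fin d → ℝ) (T : ℕ),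
      chatStar (fun x (_ : Fin d → ℝ) (_ : ℕ) => cR ℓ x) P T
        = sInf (Set.range fun x : X => cR ℓ x) := fun _ _ => rfl
  refine ⟨?_, ?_, ?_⟩
  · -- regularity of the robust predictor
    constructor
    · exact ⟨M, fun T x P hPs => cR_abs_le (hdd hPs) (hM x)⟩
    · intro x P hPs ε hε
      have hd : 0 < d := hdd hPs
      haveI : Nonempty (Fin d) := ⟨⟨0, hd⟩⟩
      have h : ∀ i : Fin d, ∃ δ > (0:ℝ), ∀ x', dist x' x < δ →
          dist (ℓ x' i) (ℓ x i) < ε/2 :=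
        fun i => Metric.continuous_iff.mp (hℓ i) x (ε/2) (by positivity)
      choose δf hδf0 hδf using h
      refine ⟨Finset.univ.inf' Finset.univ_nonempty δf,
        (Finset.lt_inf'_iff _).2 fun i _ => hδf0 i, ?_⟩
      intro T x' P'' hP'' hxx' _
      have hc : ∀ i, |ℓ x i - ℓ x' i| < ε/2 := by
        intro i
        have := hδf i x' (by
          rw [dist_comm]
          exact lt_of_lt_of_le hxx' (Finset.inf'_le _ (Finset.mem_univ i)))
        rw [Real.dist_eq, abs_sub_comm] at this
        exact this
      have h1 : cR ℓ x ≤ cR ℓ x' + ε/2 := cR_le hd fun i => by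
        have ha := (abs_lt.1 (hc i)).2
        have hb := le_cR (ℓ := ℓ) (x := x') i
        linarith
      have h2 : cR ℓ x' ≤ cR ℓ x + ε/2 := cR_le hd fun i => by
        have ha := (abs_lt.1 (hc i)).1
        have hb := le_cR (ℓ := ℓ) (x := x) i
        linarith
      rw [abs_sub_lt_iff]
      constructor <;> linarith
    · refine ⟨fun _ _ _ => 0, fun T x P _ => hasFDerivWithinAt_const _ _ _,
        ⟨0, fun T x P _ => by simp⟩,
        fun x P _ ε hε => ⟨1, one_pos, fun T x' P' _ _ _ => by simpa using hε⟩⟩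
  · -- the prescription OOS guarantee for the robust pair
    intro P hP ε hε
    filter_upwards [eventually_ge_atTop 1] with T hT1
    refine le_trans (le_of_eq ?_) (Real.exp_pos _).le
    apply Finset.sum_eq_zero
    intro ω _
    rw [if_neg]
    have hQe := empDist_mem_simplex hT1 ω
    have hle : cR ℓ (xhatR T (empDist ω)) ≤
        chatStar (fun x (_ : Fin d → ℝ) (_ : ℕ) => cR ℓ x) (empDist ω) T := by
      rw [hstar]
      refine le_csInf (Set.range_nonempty _) ?_
      rintro y ⟨x, rfl⟩
      exact hxhatR T (empDist ω) hQe x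
    have hPs : P ∈ simplex d := ⟨fun i => (hP.1 i).le, hP.2⟩
    exact not_lt.2 (le_trans (cost_le_cR hPs) hle)
  · -- strong optimality
    intro chat xhat hreg hpre hguar P hP ε hε
    have hd : 0 < d := hdd ⟨fun i => (hP.1 i).le, hP.2⟩
    have hPs : P ∈ simplex d := ⟨fun i => (hP.1 i).le, hP.2⟩
    set R := sInf (Set.range fun x : X => cR ℓ x) with hRdef
    have hbddc : BddBelow (Set.range fun x : X => cost ℓ x P) := by
      refine ⟨-M, ?_⟩
      rintro y ⟨x, rfl⟩
      exact cost_ge (fun i => (abs_le.1 (hM x i)).1) hPs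
    have hcR : cstar ℓ P ≤ R := by
      refine le_csInf (Set.range_nonempty _) ?_
      rintro y ⟨x, rfl⟩
      exact le_trans (csInf_le hbddc ⟨x, rfl⟩) (cost_le_cR hPs)
    set A : ℝ := R - cstar ℓ P with hAdef
    have hA0 : 0 ≤ A := by simp only [hAdef]; linarith
    rcases eq_or_lt_of_le hA0 with hAz | hApos
    · filter_upwards with T
      have habs : |chatStar (fun x (_ : Fin d → ℝ) (_ : ℕ) => cR ℓ x) P T - cstar ℓ P|
          = 0 := by
        rw [hstar]
        show |A| = 0
        rw [← hAz, abs_zero]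
      simp only [ratio, habs]
      split_ifs with h
      · linarith
      · rw [zero_div]; linarith
    · set η : ℝ := A * ε / (1 + ε) with hηdef
      have hηpos : 0 < η := div_pos (mul_pos hApos hε) (by linarith)
      have hηmul : η * (1 + ε) = A * ε := by
        rw [hηdef]; field_simp
      have hηA : η < A := by nlinarith
      have hkey := key_lb ℓ hℓ a ha_sup chat xhat hreg hguar hP hηpos
      filter_upwards [hkey] with T hT
      rw [← hRdef] at hT
      have hB : A - η ≤ chatStar chat P T - cstar ℓ P := by
        simp only [hAdef]; linarith
      have hBpos : 0 < chatStar chat P T - cstar ℓ P := by linarith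
      have habs1 : |chatStar (fun x (_ : Fin d → ℝ) (_ : ℕ) => cR ℓ x) P T - cstar ℓ P|
          = A := by
        rw [hstar]
        show |A| = A
        exact abs_of_pos hApos
      have habs2 : |chatStar chat P T - cstar ℓ P| = chatStar chat P T - cstar ℓ P :=
        abs_of_pos hBpos
      simp only [ratio, habs1, habs2]
      rw [if_neg (by push_neg; intro h; exact absurd h (ne_of_gt hApos))]
      rw [div_le_iff₀ hBpos]
      nlinarith [hηmul, hB, hε.le, hApos]

end DDO
end

section
/- (Convexity of SVP.) Suppose in addition that 𝒳 is a compact convex subset of ℝ^n and that x ↦ ℓ(x,i) is convex on 𝒳 for each scenario i ∈ Σ. Let Q ∈ 𝒫° and T ∈ ℕ, and suppose √(2a_T/T) ≤ (min_{i∈Σ} Q(i)) · (min_{i∈Σ} min(Q(i), 1−Q(i))). Then the function x ↦ c(x,Q) + √( (2a_T/T)·Var_Q(ℓ(x,ξ)) ) is convex on 𝒳. -/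
open Filter Asymptotics

namespace DDO

private lemma var_eq_aux {X : Type*} {d : ℕ} (ℓ : X → Fin d → ℝ) (x : X)
    (Q : Fin d → ℝ) (hQsum : ∑ i, Q i = 1) :
    varLoss ℓ x Q = ∑ i, (ℓ x i - cost ℓ x Q) ^ 2 * Q i := by
  have h : ∀ i ∈ Finset.univ, (ℓ x i - cost ℓ x Q) ^ 2 * Q i
      = ℓ x i ^ 2 * Q i - (2 * cost ℓ x Q) * (ℓ x i * Q i)
        + (cost ℓ x Q) ^ 2 * Q i := by intros; ring
  rw [Finset.sum_congr rfl h, Finset.sum_add_distrib, Finset.sum_sub_distrib,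
    ← Finset.mul_sum, ← Finset.mul_sum, hQsum]
  unfold varLoss cost
  ring

/-- Key bound: a linear perturbation inside the `κ`-ellipsoid is dominated by the
standard-deviation term. -/
private lemma pert_le_aux {X : Type*} {d : ℕ} (ℓ : X → Fin d → ℝ) (x : X)
    (Q : Fin d → ℝ) (hQpos : ∀ i, 0 < Q i) (hQsum : ∑ i, Q i = 1)
    (κ : ℝ) (hκ : 0 ≤ κ) (Δ : Fin d → ℝ) (hΔ0 : ∑ i, Δ i = 0)
    (hΔκ : ∑ i, Δ i ^ 2 / Q i ≤ κ) :
    ∑ i, ℓ x i * Δ i ≤ Real.sqrt (κ * varLoss ℓ x Q) := by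
  set c := cost ℓ x Q with hc
  have hV : varLoss ℓ x Q = ∑ i, (ℓ x i - c) ^ 2 * Q i := var_eq_aux ℓ x Q hQsum
  have hVnn : 0 ≤ varLoss ℓ x Q := by
    rw [hV]; exact Finset.sum_nonneg fun i _ => mul_nonneg (sq_nonneg _) (hQpos i).le
  have hrewrite : ∑ i, ℓ x i * Δ i = ∑ i, (ℓ x i - c) * Δ i := by
    have : ∑ i, (ℓ x i - c) * Δ i = (∑ i, ℓ x i * Δ i) - c * ∑ i, Δ i := by
      rw [Finset.mul_sum, ← Finset.sum_sub_distrib]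
      exact Finset.sum_congr rfl fun i _ => by ring
    rw [this, hΔ0]; ring
  have hCS : (∑ i, (ℓ x i - c) * Δ i) ^ 2 ≤ varLoss ℓ x Q * ∑ i, Δ i ^ 2 / Q i := by
    have := Finset.sum_mul_sq_le_sq_mul_sq Finset.univ
      (fun i => (ℓ x i - c) * Real.sqrt (Q i)) (fun i => Δ i / Real.sqrt (Q i))
    have heq1 : ∀ i ∈ Finset.univ,
        ((ℓ x i - c) * Real.sqrt (Q i)) * (Δ i / Real.sqrt (Q i)) = (ℓ x i - c) * Δ i := by
      intro i _
      have hs : Real.sqrt (Q i) ≠ 0 := Real.sqrt_ne_zero'.mpr (hQpos i)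
      field_simp
    have heq2 : ∀ i ∈ Finset.univ,
        ((ℓ x i - c) * Real.sqrt (Q i)) ^ 2 = (ℓ x i - c) ^ 2 * Q i := by
      intro i _
      rw [mul_pow, Real.sq_sqrt (hQpos i).le]
    have heq3 : ∀ i ∈ Finset.univ,
        (Δ i / Real.sqrt (Q i)) ^ 2 = Δ i ^ 2 / Q i := by
      intro i _
      rw [div_pow, Real.sq_sqrt (hQpos i).le]
    rw [Finset.sum_congr rfl heq1, Finset.sum_congr rfl heq2,
      Finset.sum_congr rfl heq3] at this
    rw [hV]
    exact this
  have hsq : (∑ i, (ℓ x i - c) * Δ i) ^ 2 ≤ κ * varLoss ℓ x Q := by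
    calc (∑ i, (ℓ x i - c) * Δ i) ^ 2 ≤ varLoss ℓ x Q * ∑ i, Δ i ^ 2 / Q i := hCS
      _ ≤ varLoss ℓ x Q * κ := mul_le_mul_of_nonneg_left hΔκ hVnn
      _ = κ * varLoss ℓ x Q := mul_comm _ _
  rw [hrewrite]
  calc ∑ i, (ℓ x i - c) * Δ i ≤ |∑ i, (ℓ x i - c) * Δ i| := le_abs_self _
    _ = Real.sqrt ((∑ i, (ℓ x i - c) * Δ i) ^ 2) := (Real.sqrt_sq_eq_abs _).symm
    _ ≤ Real.sqrt (κ * varLoss ℓ x Q) := Real.sqrt_le_sqrt hsq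

/-- Convexity of SVP: if `𝒳` is a compact convex subset of `ℝ^n`, the loss is convex
in the decision, and `√(2a_T/T) ≤ (min_i Q(i)) · (min_i min(Q(i), 1-Q(i)))`, then
`x ↦ c(x,Q) + √((2a_T/T)·Var_Q(ℓ(x,ξ)))` is convex on `𝒳`. -/
theorem stmt_14 {n d : ℕ} (Xs : Set (Fin n → ℝ))
    (hXconv : Convex ℝ Xs) (hXcomp : IsCompact Xs)
    (ℓ : (Fin n → ℝ) → Fin d → ℝ)
    (hℓcont : ∀ i, ContinuousOn (fun x => ℓ x i) Xs)
    (hℓconv : ∀ i, ConvexOn ℝ Xs fun x => ℓ x i)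
    (a : ℕ → ℝ) (ha_pos : ∀ T, 0 < a T)
    (Q : Fin d → ℝ) (hQ : Q ∈ simplexInt d)
    (T : ℕ) (hT : 0 < T)
    (hTlarge : ∀ i j : Fin d,
      Real.sqrt (2 * a T / (T : ℝ)) ≤ Q i * min (Q j) (1 - Q j)) :
    ConvexOn ℝ Xs fun x =>
      cost ℓ x Q + Real.sqrt ((2 * a T / (T : ℝ)) * varLoss ℓ x Q) := by
  obtain ⟨hQpos, hQsum⟩ := hQ
  set κ := 2 * a T / (T : ℝ) with hκdef
  have hκpos : 0 < κ := div_pos (by have := ha_pos T; linarith) (by exact_mod_cast hT)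
  have hQle1 : ∀ i, Q i ≤ 1 := by
    intro i
    rw [← hQsum]
    exact Finset.single_le_sum (fun j _ => (hQpos j).le) (Finset.mem_univ i)
  have hsκQ : ∀ i, Real.sqrt κ ≤ Q i := by
    intro i
    refine le_trans (hTlarge i i) ?_
    have h1 := min_le_left (Q i) (1 - Q i)
    nlinarith [hQpos i, hQle1 i]
  have hκQ : ∀ i, κ ≤ Q i := by
    intro i
    have h2 : Real.sqrt κ ≤ 1 := (hsκQ i).trans (hQle1 i)
    calc κ = Real.sqrt κ * Real.sqrt κ := (Real.mul_self_sqrt hκpos.le).symm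
      _ ≤ Q i * 1 := mul_le_mul (hsκQ i) h2 (Real.sqrt_nonneg _) (hQpos i).le
      _ = Q i := mul_one _
  refine ⟨hXconv, ?_⟩
  intro x hx y hy s t hs ht hst
  simp only [smul_eq_mul]
  set z := s • x + t • y with hz
  have hzX : z ∈ Xs := hXconv hx hy hs ht hst
  have hℓz : ∀ i, ℓ z i ≤ s * ℓ x i + t * ℓ y i := by
    intro i
    have := (hℓconv i).2 hx hy hs ht hst
    simpa using this
  set c := cost ℓ z Q with hc
  set V := varLoss ℓ z Q with hVdef
  have hV : V = ∑ i, (ℓ z i - c) ^ 2 * Q i := var_eq_aux ℓ z Q hQsum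
  have hVnn : 0 ≤ V := by
    rw [hV]; exact Finset.sum_nonneg fun i _ => mul_nonneg (sq_nonneg _) (hQpos i).le
  have hsum0 : ∀ r' : ℝ, ∑ i, r' * (ℓ z i - c) * Q i = 0 := by
    intro r'
    have h1 : ∑ i, r' * (ℓ z i - c) * Q i
        = (∑ i, r' * (ℓ z i * Q i)) - ∑ i, r' * c * Q i := by
      rw [← Finset.sum_sub_distrib]
      exact Finset.sum_congr rfl fun i _ => by ring
    rw [h1, ← Finset.mul_sum, ← Finset.mul_sum, hQsum, hc]
    simp [cost]
  -- construct the optimal perturbation Δ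
  obtain ⟨Δ, hΔ0, hΔκ, hΔpos, hΔeq⟩ :
      ∃ Δ : Fin d → ℝ, (∑ i, Δ i = 0) ∧ (∑ i, Δ i ^ 2 / Q i ≤ κ) ∧
        (∀ i, 0 ≤ Q i + Δ i) ∧
        c + Real.sqrt (κ * V) = ∑ i, ℓ z i * (Q i + Δ i) := by
    rcases hVnn.eq_or_lt with hV0 | hVpos
    · refine ⟨fun _ => 0, by simp, by simp [hκpos.le], fun i => by simpa using (hQpos i).le, ?_⟩
      rw [← hV0]
      simp [hc, cost]
    · set r := Real.sqrt (κ / V) with hr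
      have hVne : V ≠ 0 := hVpos.ne'
      have hrpos : 0 < r := Real.sqrt_pos.mpr (div_pos hκpos hVpos)
      have hr2 : r ^ 2 = κ / V := Real.sq_sqrt (div_pos hκpos hVpos).le
      refine ⟨fun i => r * (ℓ z i - c) * Q i, hsum0 r, ?_, ?_, ?_⟩
      · show ∑ i, (r * (ℓ z i - c) * Q i) ^ 2 / Q i ≤ κ
        have heach : ∀ i ∈ Finset.univ,
            (r * (ℓ z i - c) * Q i) ^ 2 / Q i = (κ / V) * ((ℓ z i - c) ^ 2 * Q i) := by
          intro i _
          have hQne : Q i ≠ 0 := (hQpos i).ne'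
          have h1 : (r * (ℓ z i - c) * Q i) ^ 2
              = r ^ 2 * ((ℓ z i - c) ^ 2 * Q i) * Q i := by ring
          rw [h1, mul_div_assoc, div_self hQne, mul_one, hr2]
        rw [Finset.sum_congr rfl heach, ← Finset.mul_sum, ← hV, div_mul_cancel₀ _ hVne]
      · intro i
        show 0 ≤ Q i + r * (ℓ z i - c) * Q i
        have hbound : (ℓ z i - c) ^ 2 * Q i ≤ V := by
          rw [hV]
          exact Finset.single_le_sum (f := fun j => (ℓ z j - c) ^ 2 * Q j)
            (fun j _ => mul_nonneg (sq_nonneg _) (hQpos j).le) (Finset.mem_univ i)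
        have hsq : (r * (ℓ z i - c) * Q i) ^ 2 ≤ Q i ^ 2 := by
          have h1 : (r * (ℓ z i - c) * Q i) ^ 2
              = (κ / V) * (ℓ z i - c) ^ 2 * Q i ^ 2 := by
            rw [mul_pow, mul_pow, hr2]
          rw [h1]
          have h2 : κ * (ℓ z i - c) ^ 2 ≤ V := by
            calc κ * (ℓ z i - c) ^ 2 ≤ Q i * (ℓ z i - c) ^ 2 :=
              mul_le_mul_of_nonneg_right (hκQ i) (sq_nonneg _)
              _ = (ℓ z i - c) ^ 2 * Q i := mul_comm _ _
              _ ≤ V := hbound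
          have h3 : (κ / V) * (ℓ z i - c) ^ 2 ≤ 1 := by
            rw [div_mul_eq_mul_div, div_le_one hVpos]
            linarith
          nlinarith [sq_nonneg (Q i)]
        have habs : |r * (ℓ z i - c) * Q i| ≤ Q i := by
          have := Real.sqrt_le_sqrt hsq
          rwa [Real.sqrt_sq_eq_abs, Real.sqrt_sq (hQpos i).le] at this
        have hnab := neg_abs_le (r * (ℓ z i - c) * Q i)
        linarith [neg_le_neg habs]
      · show c + Real.sqrt (κ * V) = ∑ i, ℓ z i * (Q i + r * (ℓ z i - c) * Q i)
        have hsplit : ∑ i, ℓ z i * (Q i + r * (ℓ z i - c) * Q i)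
            = c + ∑ i, ℓ z i * (r * (ℓ z i - c) * Q i) := by
          rw [hc]
          simp only [cost, ← Finset.sum_add_distrib]
          exact Finset.sum_congr rfl fun i _ => by ring
        have hterm : ∀ i ∈ Finset.univ, ℓ z i * (r * (ℓ z i - c) * Q i)
            = r * ((ℓ z i - c) ^ 2 * Q i) + c * (r * (ℓ z i - c) * Q i) := by
          intro i _; ring
        have h2 : ∑ i, ℓ z i * (r * (ℓ z i - c) * Q i) = r * V := by
          rw [Finset.sum_congr rfl hterm, Finset.sum_add_distrib, ← Finset.mul_sum,
            ← Finset.mul_sum]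
          have := hsum0 r
          rw [hV]
          calc r * (∑ i, (ℓ z i - c) ^ 2 * Q i)
              + c * ∑ i, r * (ℓ z i - c) * Q i
              = r * (∑ i, (ℓ z i - c) ^ 2 * Q i) + c * 0 := by rw [this]
            _ = r * ∑ i, (ℓ z i - c) ^ 2 * Q i := by ring
        have hrV : r * V = Real.sqrt (κ * V) := by
          have h := Real.sqrt_mul (div_pos hκpos hVpos).le (V ^ 2)
          rw [Real.sqrt_sq hVpos.le] at h
          have h2' : κ / V * V ^ 2 = κ * V := by field_simp
          rw [h2'] at h
          rw [hr] at *
          exact h.symm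
        rw [hsplit, h2, hrV]
  -- now conclude convexity
  have hstep1 : ∑ i, ℓ z i * (Q i + Δ i)
      ≤ ∑ i, (s * ℓ x i + t * ℓ y i) * (Q i + Δ i) :=
    Finset.sum_le_sum fun i _ =>
      mul_le_mul_of_nonneg_right (hℓz i) (hΔpos i)
  have hsplit2 : ∑ i, (s * ℓ x i + t * ℓ y i) * (Q i + Δ i)
      = s * (∑ i, ℓ x i * (Q i + Δ i)) + t * (∑ i, ℓ y i * (Q i + Δ i)) := by
    rw [Finset.mul_sum, Finset.mul_sum, ← Finset.sum_add_distrib]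
    exact Finset.sum_congr rfl fun i _ => by ring
  have hA : ∀ w : Fin n → ℝ, ∑ i, ℓ w i * (Q i + Δ i)
      ≤ cost ℓ w Q + Real.sqrt (κ * varLoss ℓ w Q) := by
    intro w
    have h1 : ∑ i, ℓ w i * (Q i + Δ i)
        = cost ℓ w Q + ∑ i, ℓ w i * Δ i := by
      simp only [cost, ← Finset.sum_add_distrib]
      exact Finset.sum_congr rfl fun i _ => by ring
    rw [h1]
    have := pert_le_aux ℓ w Q hQpos hQsum κ hκpos.le Δ hΔ0 hΔκ
    linarith
  calc cost ℓ z Q + Real.sqrt (κ * varLoss ℓ z Q)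
      = ∑ i, ℓ z i * (Q i + Δ i) := hΔeq
    _ ≤ s * (∑ i, ℓ x i * (Q i + Δ i)) + t * (∑ i, ℓ y i * (Q i + Δ i)) := by
        rw [← hsplit2]; exact hstep1
    _ ≤ s * (cost ℓ x Q + Real.sqrt (κ * varLoss ℓ x Q))
        + t * (cost ℓ y Q + Real.sqrt (κ * varLoss ℓ y Q)) := by
        have hax := hA x
        have hay := hA y
        exact add_le_add (mul_le_mul_of_nonneg_left hax hs)
          (mul_le_mul_of_nonneg_left hay ht)

end DDO
end

section
/- (Regularization of SVP prescription.) Let (a_T) be positive with a_T/T → 0, and fix P ∈ 𝒫°. Let x*(P) be a minimizer of c(·,P) with lowest variance, i.e., x*(P) ∈ argmin{ Var_P(ℓ(x,ξ)) : x ∈ argmin_{x'∈𝒳} c(x',P) }. Then for all T ∈ ℕ: |ĉ_V*(P,T) − c*(P)| ≤ √( (2a_T/T)·Var_P(ℓ(x*(P),ξ)) ), where ĉ_V*(P,T) := min_{x∈𝒳} ĉ_V(x,P,T) and c*(P) := min_{x∈𝒳} c(x,P). Furthermore, ĉ_V*(P,T) − c*(P) = √( (2a_T/T)·Var_P(ℓ(x*(P),ξ))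 ) + o(√(a_T/T)) as T → ∞, and for any sequence x̂_{V,T}(P) ∈ argmin_{x∈𝒳} ĉ_V(x,P,T) one has Var_P(ℓ(x̂_{V,T}(P),ξ)) → Var_P(ℓ(x*(P),ξ)) as T → ∞. -/
open Filter Asymptotics

namespace DDO

section AuxStmt15

variable {X : Type*} [MetricSpace X] [CompactSpace X] {d : ℕ}

lemma cost_cont (ℓ : X → Fin d → ℝ) (hℓ : ∀ i, Continuous fun x => ℓ x i)
    (P : Fin d → ℝ) : Continuous fun x => cost ℓ x P := by
  unfold cost
  exact continuous_finset_sum _ fun i _ => (hℓ i).mul continuous_const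

lemma varLoss_cont (ℓ : X → Fin d → ℝ) (hℓ : ∀ i, Continuous fun x => ℓ x i)
    (P : Fin d → ℝ) : Continuous fun x => varLoss ℓ x P := by
  unfold varLoss
  exact (continuous_finset_sum _ fun i _ => ((hℓ i).pow 2).mul continuous_const).sub
    ((cost_cont ℓ hℓ P).pow 2)

lemma varLoss_nonneg (ℓ : X → Fin d → ℝ) {P : Fin d → ℝ} (hP : P ∈ simplex d) (x : X) :
    0 ≤ varLoss ℓ x P := by
  have h := Finset.sum_mul_sq_le_sq_mul_sq Finset.univ
    (fun i => ℓ x i * Real.sqrt (P i)) (fun i => Real.sqrt (P i))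
  have h1 : ∀ i : Fin d, (ℓ x i * Real.sqrt (P i)) * Real.sqrt (P i) = ℓ x i * P i := by
    intro i
    rw [mul_assoc, Real.mul_self_sqrt (hP.1 i)]
  have h2 : ∀ i : Fin d, (ℓ x i * Real.sqrt (P i)) ^ 2 = ℓ x i ^ 2 * P i := by
    intro i
    rw [mul_pow, Real.sq_sqrt (hP.1 i)]
  have h3 : ∀ i : Fin d, (Real.sqrt (P i)) ^ 2 = P i := fun i => Real.sq_sqrt (hP.1 i)
  simp only [h1, h2, h3] at h
  rw [hP.2, mul_one] at h
  unfold varLoss cost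
  linarith

lemma sqrtsub_le (u v : ℝ) (hv : 0 ≤ v) : Real.sqrt u - Real.sqrt v ≤ Real.sqrt (u - v) := by
  rcases le_or_gt u v with h | h
  · have := Real.sqrt_le_sqrt h
    linarith [Real.sqrt_nonneg (u - v)]
  · have huv : 0 ≤ u - v := by linarith
    have key : u ≤ (Real.sqrt (u - v) + Real.sqrt v) ^ 2 := by
      have e1 := Real.sq_sqrt huv
      have e2 := Real.sq_sqrt hv
      nlinarith [Real.sqrt_nonneg (u - v), Real.sqrt_nonneg v]
    have h2 := Real.sqrt_le_sqrt key
    rw [Real.sqrt_sq (by positivity)] at h2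
    linarith

lemma gap_lemma (ℓ : X → Fin d → ℝ) (hℓ : ∀ i, Continuous fun x => ℓ x i)
    (P : Fin d → ℝ) (xstar : X)
    (hx1 : ∀ x : X, cost ℓ xstar P ≤ cost ℓ x P)
    (hx2 : ∀ x : X, (∀ y : X, cost ℓ x P ≤ cost ℓ y P) →
      varLoss ℓ xstar P ≤ varLoss ℓ x P)
    {ε : ℝ} (hε : 0 < ε) :
    ∃ δ > (0 : ℝ), ∀ x : X, varLoss ℓ x P ≤ varLoss ℓ xstar P - ε →
      cost ℓ xstar P + δ ≤ cost ℓ x P := by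
  set S : Set X := {x | varLoss ℓ x P ≤ varLoss ℓ xstar P - ε} with hSdef
  by_cases hS : S.Nonempty
  · have hScl : IsClosed S := isClosed_le (varLoss_cont ℓ hℓ P) continuous_const
    have hSc : IsCompact S := hScl.isCompact
    obtain ⟨x0, hx0S, hx0⟩ := hSc.exists_isMinOn hS (cost_cont ℓ hℓ P).continuousOn
    refine ⟨cost ℓ x0 P - cost ℓ xstar P, ?_, fun x hx => by
      have := hx0 hx; simp only [Set.mem_setOf_eq] at this ⊢; linarith⟩
    have h1 : cost ℓ xstar P ≤ cost ℓ x0 P := hx1 x0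
    rcases lt_or_eq_of_le h1 with h | h
    · linarith
    · exfalso
      have hmin : ∀ y : X, cost ℓ x0 P ≤ cost ℓ y P := by
        intro y; rw [← h]; exact hx1 y
      have := hx2 x0 hmin
      have hx0S' : varLoss ℓ x0 P ≤ varLoss ℓ xstar P - ε := hx0S
      linarith
  · exact ⟨1, one_pos, fun x hx => absurd ⟨x, hx⟩ hS⟩

lemma cstar_eq (ℓ : X → Fin d → ℝ) (P : Fin d → ℝ) (xstar : X)
    (hx1 : ∀ x : X, cost ℓ xstar P ≤ cost ℓ x P) :
    cstar ℓ P = cost ℓ xstar P := by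
  unfold cstar
  apply le_antisymm
  · exact csInf_le ⟨cost ℓ xstar P, by rintro y ⟨x, rfl⟩; exact hx1 x⟩ ⟨xstar, rfl⟩
  · exact le_csInf ⟨_, ⟨xstar, rfl⟩⟩ (by rintro y ⟨x, rfl⟩; exact hx1 x)

end AuxStmt15

/-- Regularization of the SVP prescription: with `x*(P)` a minimizer of `c(·,P)` of
lowest variance, `|ĉ_V*(P,T) - c*(P)| ≤ √((2a_T/T)·Var_P(ℓ(x*(P),ξ)))` for all `T`,
`ĉ_V*(P,T) - c*(P) = √((2a_T/T)·Var_P(ℓ(x*(P),ξ))) + o(√(a_T/T))`, and the variance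
of any SVP prescription converges to `Var_P(ℓ(x*(P),ξ))`. -/
theorem stmt_15 {X : Type*} [MetricSpace X] [CompactSpace X] {d : ℕ}
    (ℓ : X → Fin d → ℝ) (hℓ : ∀ i, Continuous fun x => ℓ x i)
    (a : ℕ → ℝ) (ha_pos : ∀ T, 0 < a T)
    (ha_sub : Tendsto (fun T : ℕ => a T / (T : ℝ)) atTop (nhds 0))
    (P : Fin d → ℝ) (hP : P ∈ simplexInt d)
    (xstar : X) (hx1 : ∀ x : X, cost ℓ xstar P ≤ cost ℓ x P)
    (hx2 : ∀ x : X, (∀ y : X, cost ℓ x P ≤ cost ℓ y P) →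
      varLoss ℓ xstar P ≤ varLoss ℓ x P) :
    (∀ T : ℕ, 0 < T →
        |chatStar (cV a ℓ) P T - cstar ℓ P| ≤
          Real.sqrt ((2 * a T / (T : ℝ)) * varLoss ℓ xstar P)) ∧
      ((fun T : ℕ => chatStar (cV a ℓ) P T - cstar ℓ P -
            Real.sqrt ((2 * a T / (T : ℝ)) * varLoss ℓ xstar P)) =o[atTop]
          fun T : ℕ => Real.sqrt (a T / (T : ℝ))) ∧
      ∀ xhatV : ℕ → X,
        (∀ (T : ℕ) (x : X), cV a ℓ (xhatV T) P T ≤ cV a ℓ x P T) →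
          Tendsto (fun T : ℕ => varLoss ℓ (xhatV T) P) atTop
            (nhds (varLoss ℓ xstar P)) := by
  have hPs : P ∈ simplex d := ⟨fun i => (hP.1 i).le, hP.2⟩
  have hVnn : ∀ x : X, 0 ≤ varLoss ℓ x P := varLoss_nonneg ℓ hPs
  have hcs : cstar ℓ P = cost ℓ xstar P := cstar_eq ℓ P xstar hx1
  have hbdd : ∀ T : ℕ, BddBelow (Set.range fun x : X => cV a ℓ x P T) := by
    intro T
    refine ⟨cost ℓ xstar P, ?_⟩
    rintro y ⟨x, rfl⟩
    have hs := Real.sqrt_nonneg ((2 * a T / (T : ℝ)) * varLoss ℓ x P)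
    have := hx1 x
    unfold cV
    linarith
  have hub : ∀ T : ℕ, chatStar (cV a ℓ) P T ≤
      cost ℓ xstar P + Real.sqrt ((2 * a T / (T : ℝ)) * varLoss ℓ xstar P) := by
    intro T
    exact csInf_le (hbdd T) ⟨xstar, rfl⟩
  have hlb : ∀ T : ℕ, cost ℓ xstar P ≤ chatStar (cV a ℓ) P T := by
    intro T
    refine le_csInf ⟨_, ⟨xstar, rfl⟩⟩ ?_
    rintro y ⟨x, rfl⟩
    have hs := Real.sqrt_nonneg ((2 * a T / (T : ℝ)) * varLoss ℓ x P)
    have := hx1 x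
    unfold cV
    linarith
  have hsub2 : Tendsto (fun T : ℕ => 2 * (a T / (T : ℝ)) * varLoss ℓ xstar P)
      atTop (nhds 0) := by
    have h := (ha_sub.const_mul 2).mul_const (varLoss ℓ xstar P)
    simpa using h
  refine ⟨?_, ?_, ?_⟩
  · intro T _
    rw [hcs, abs_le]
    constructor
    · linarith [hlb T, Real.sqrt_nonneg ((2 * a T / (T : ℝ)) * varLoss ℓ xstar P)]
    · linarith [hub T]
  · rw [isLittleO_iff]
    intro c hc
    obtain ⟨δ, hδ, hgap⟩ := gap_lemma ℓ hℓ P xstar hx1 hx2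
      (ε := c ^ 2 / 2) (by positivity)
    have hev1 : ∀ᶠ T : ℕ in atTop,
        2 * (a T / (T : ℝ)) * varLoss ℓ xstar P < δ ^ 2 :=
      hsub2.eventually (gt_mem_nhds (by positivity))
    filter_upwards [hev1, eventually_ge_atTop 1] with T hT1 hT2
    have hTpos : (0 : ℝ) < (T : ℝ) := by exact_mod_cast hT2
    have haT := ha_pos T
    have hκ : (0 : ℝ) ≤ 2 * a T / (T : ℝ) := by positivity
    have hrw : 2 * a T / (T : ℝ) = 2 * (a T / (T : ℝ)) := by ring
    have hRHS : Real.sqrt ((2 * a T / (T : ℝ)) * (c ^ 2 / 2)) =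
        c * Real.sqrt (a T / (T : ℝ)) := by
      have h1 : (2 * a T / (T : ℝ)) * (c ^ 2 / 2) = c ^ 2 * (a T / (T : ℝ)) := by ring
      rw [h1, Real.sqrt_mul (sq_nonneg c), Real.sqrt_sq hc.le]
    have key : ∀ x : X, cost ℓ xstar P +
        (Real.sqrt ((2 * a T / (T : ℝ)) * varLoss ℓ xstar P) -
          Real.sqrt ((2 * a T / (T : ℝ)) * (c ^ 2 / 2))) ≤ cV a ℓ x P T := by
      intro x
      have hsx := Real.sqrt_nonneg ((2 * a T / (T : ℝ)) * varLoss ℓ x P)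
      have hse := Real.sqrt_nonneg ((2 * a T / (T : ℝ)) * (c ^ 2 / 2))
      rcases le_or_gt (varLoss ℓ x P) (varLoss ℓ xstar P - c ^ 2 / 2) with h | h
      · have hgx := hgap x h
        have hδbd : Real.sqrt ((2 * a T / (T : ℝ)) * varLoss ℓ xstar P) ≤ δ := by
          have hle : (2 * a T / (T : ℝ)) * varLoss ℓ xstar P ≤ δ ^ 2 := by
            rw [hrw]; linarith
          calc Real.sqrt ((2 * a T / (T : ℝ)) * varLoss ℓ xstar P)
              ≤ Real.sqrt (δ ^ 2) := Real.sqrt_le_sqrt hle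
            _ = δ := Real.sqrt_sq hδ.le
        unfold cV
        linarith
      · have h1 : Real.sqrt ((2 * a T / (T : ℝ)) * varLoss ℓ xstar P) -
            Real.sqrt ((2 * a T / (T : ℝ)) * (c ^ 2 / 2)) ≤
            Real.sqrt ((2 * a T / (T : ℝ)) * varLoss ℓ xstar P -
              (2 * a T / (T : ℝ)) * (c ^ 2 / 2)) :=
          sqrtsub_le _ _ (by positivity)
        have h2 : Real.sqrt ((2 * a T / (T : ℝ)) * varLoss ℓ xstar P -
            (2 * a T / (T : ℝ)) * (c ^ 2 / 2)) ≤
            Real.sqrt ((2 * a T / (T : ℝ)) * varLoss ℓ x P) := by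
          apply Real.sqrt_le_sqrt
          have heq : (2 * a T / (T : ℝ)) * varLoss ℓ xstar P -
              (2 * a T / (T : ℝ)) * (c ^ 2 / 2) =
              (2 * a T / (T : ℝ)) * (varLoss ℓ xstar P - c ^ 2 / 2) := by ring
          rw [heq]
          exact mul_le_mul_of_nonneg_left h.le hκ
        have := hx1 x
        unfold cV
        linarith
    have hlb2 : cost ℓ xstar P +
        (Real.sqrt ((2 * a T / (T : ℝ)) * varLoss ℓ xstar P) -
          Real.sqrt ((2 * a T / (T : ℝ)) * (c ^ 2 / 2))) ≤ chatStar (cV a ℓ) P T := by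
      refine le_csInf ⟨_, ⟨xstar, rfl⟩⟩ ?_
      rintro y ⟨x, rfl⟩
      exact key x
    have hubT := hub T
    rw [Real.norm_eq_abs, Real.norm_eq_abs,
      abs_of_nonneg (Real.sqrt_nonneg (a T / (T : ℝ))), ← hRHS, hcs, abs_le]
    constructor
    · linarith
    · linarith [Real.sqrt_nonneg ((2 * a T / (T : ℝ)) * (c ^ 2 / 2))]
  · intro xhatV hmin
    rw [Metric.tendsto_atTop]
    intro ε hε
    obtain ⟨δ, hδ, hgap⟩ := gap_lemma ℓ hℓ P xstar hx1 hx2 hε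
    have hev1 : ∀ᶠ T : ℕ in atTop,
        2 * (a T / (T : ℝ)) * varLoss ℓ xstar P < δ ^ 2 :=
      hsub2.eventually (gt_mem_nhds (by positivity))
    have hev : ∀ᶠ T : ℕ in atTop,
        dist (varLoss ℓ (xhatV T) P) (varLoss ℓ xstar P) < ε := by
      filter_upwards [hev1, eventually_ge_atTop 1] with T hT1 hT2
      have hTpos : (0 : ℝ) < (T : ℝ) := by exact_mod_cast hT2
      have haT := ha_pos T
      have hκpos : (0 : ℝ) < 2 * a T / (T : ℝ) := by positivity
      have hmin' := hmin T xstar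
      unfold cV at hmin'
      have hc1 : cost ℓ xstar P ≤ cost ℓ (xhatV T) P := hx1 _
      have hδbd : Real.sqrt ((2 * a T / (T : ℝ)) * varLoss ℓ xstar P) < δ := by
        have hle : (2 * a T / (T : ℝ)) * varLoss ℓ xstar P < δ ^ 2 := by
          have hrw : 2 * a T / (T : ℝ) = 2 * (a T / (T : ℝ)) := by ring
          rw [hrw]; linarith
        calc Real.sqrt ((2 * a T / (T : ℝ)) * varLoss ℓ xstar P)
            < Real.sqrt (δ ^ 2) :=
              Real.sqrt_lt_sqrt (mul_nonneg hκpos.le (hVnn xstar)) hle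
          _ = δ := Real.sqrt_sq hδ.le
      have hs1 : Real.sqrt ((2 * a T / (T : ℝ)) * varLoss ℓ (xhatV T) P) ≤
          Real.sqrt ((2 * a T / (T : ℝ)) * varLoss ℓ xstar P) := by linarith
      have hq : (2 * a T / (T : ℝ)) * varLoss ℓ (xhatV T) P ≤
          (2 * a T / (T : ℝ)) * varLoss ℓ xstar P := by
        rwa [Real.sqrt_le_sqrt_iff (mul_nonneg hκpos.le (hVnn xstar))] at hs1
      have hvu : varLoss ℓ (xhatV T) P ≤ varLoss ℓ xstar P :=
        (mul_le_mul_iff_right₀ hκpos).1 hq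
      have hcost : cost ℓ (xhatV T) P < cost ℓ xstar P + δ := by
        have hsnn := Real.sqrt_nonneg ((2 * a T / (T : ℝ)) * varLoss ℓ (xhatV T) P)
        linarith
      have hvl : varLoss ℓ xstar P - ε < varLoss ℓ (xhatV T) P := by
        by_contra hcon
        push_neg at hcon
        have := hgap (xhatV T) hcon
        linarith
      rw [Real.dist_eq, abs_lt]
      constructor <;> linarith
    obtain ⟨N, hN⟩ := eventually_atTop.1 hev
    exact ⟨N, hN⟩


end DDO
end
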